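/- arXiv:2505.24326 — 7 statements merged into one kernel-verified Lean document; each statement's English description precedes it below -/
import Mathlib

section
/- Let A be an N×N unitary complex matrix, and let K, L be subsets of {0,...,N-1} with |K| = |L|. Then the submatrix A[K,L] (rows indexed by K, columns by L) is invertible if and only if the complementary submatrix A[Kᶜ, Lᶜ] is invertible. -/
open Matrix Finset

private lemma univ_map_orderEmbOfFin {N r : ℕ} (K : Finset (Fin N)) (hK : K.card = r) :
    Finset.univ.map (K.orderEmbOfFin hK).toEmbedding = K := by
  apply Finset.eq_of_subset_of_card_le
  · intro x hx
    simp only [Finset.mem_map, Finset.mem_univ, true_and] at hx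
    obtain ⟨t, rfl⟩ := hx
    exact K.orderEmbOfFin_mem hK t
  · simp [hK]

private lemma orderEmbOfFin_congr {α : Type*} [LinearOrder α] {K K' : Finset α}
    (h : K = K') {r : ℕ} (hK : K.card = r) :
    (K.orderEmbOfFin hK : Fin r → α) = K'.orderEmbOfFin (h ▸ hK) := by
  subst h; rfl

private lemma aux {N r s : ℕ} (A : Matrix (Fin N) (Fin N) ℂ)
    (hA : A ∈ Matrix.unitaryGroup (Fin N) ℂ)
    (K L : Finset (Fin N)) (hK : K.card = r) (hL : L.card = r)
    (hKc : Kᶜ.card = s) (hLc : Lᶜ.card = s)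
    (h : (A.submatrix (Kᶜ.orderEmbOfFin hKc) (Lᶜ.orderEmbOfFin hLc)).det = 0) :
    (A.submatrix (K.orderEmbOfFin hK) (L.orderEmbOfFin hL)).det = 0 := by
  classical
  set eK := (K.orderEmbOfFin hK : Fin r → Fin N) with heK
  set eL := (L.orderEmbOfFin hL : Fin r → Fin N) with heL
  set eKc := (Kᶜ.orderEmbOfFin hKc : Fin s → Fin N) with heKc
  set eLc := (Lᶜ.orderEmbOfFin hLc : Fin s → Fin N) with heLc
  obtain ⟨v, hv0, hv⟩ := Matrix.exists_mulVec_eq_zero_iff.2 h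
  have hinjLc : Function.Injective eLc := (Lᶜ.orderEmbOfFin hLc).injective
  set w : Fin N → ℂ := fun j => ∑ t, if j = eLc t then v t else 0 with hw
  set u := A.mulVec w with hu
  have hu_eq : ∀ i, u i = ∑ t, A i (eLc t) * v t := by
    intro i
    simp only [hu, Matrix.mulVec, dotProduct, hw, Finset.mul_sum]
    rw [Finset.sum_comm]
    refine Finset.sum_congr rfl fun t _ => ?_
    simp [mul_ite]
  have huKc : ∀ i ∈ Kᶜ, u i = 0 := by
    intro i hi
    obtain ⟨t, rfl⟩ : ∃ t, eKc t = i := by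
      have hr := Kᶜ.range_orderEmbOfFin hKc
      have : i ∈ Set.range eKc := by rw [heKc, hr]; exact hi
      exact this
    have := congrFun hv t
    simpa [Matrix.mulVec, dotProduct, hu_eq] using this
  have hwL : ∀ j ∈ L, w j = 0 := by
    intro j hj
    apply Finset.sum_eq_zero
    intro t _
    have : j ≠ eLc t := by
      intro hjt
      have := Lᶜ.orderEmbOfFin_mem hLc t
      rw [← heLc, ← hjt] at this
      exact (Finset.mem_compl.1 this) hj
    simp [this]
  have hwLc : ∀ t, w (eLc t) = v t := by
    intro t
    simp only [hw]
    simp [hinjLc.eq_iff]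
  have hstar : (star A) * A = 1 := hA.1
  have hwu : (star A).mulVec u = w := by
    rw [hu, Matrix.mulVec_mulVec, hstar, Matrix.one_mulVec]
  -- the key vanishing
  set x : Fin r → ℂ := fun t => u (eK t) with hx
  set M := (A.submatrix eK eL)ᴴ with hM
  have hMx : M.mulVec x = 0 := by
    funext s'
    have h1 : w (eL s') = 0 := hwL _ (L.orderEmbOfFin_mem hL s')
    have h2 : (star A).mulVec u (eL s') = 0 := by rw [hwu]; exact h1
    rw [Matrix.mulVec, dotProduct] at h2
    have hsplit : ∑ i : Fin N, star A (eL s') i * u i =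
        ∑ i ∈ K, star A (eL s') i * u i + ∑ i ∈ Kᶜ, star A (eL s') i * u i :=
      (Finset.sum_add_sum_compl K _).symm
    have hKcz : ∑ i ∈ Kᶜ, star A (eL s') i * u i = 0 :=
      Finset.sum_eq_zero fun i hi => by rw [huKc i hi, mul_zero]
    have hKsum : ∑ i ∈ K, star A (eL s') i * u i
        = ∑ t : Fin r, star A (eL s') (eK t) * u (eK t) := by
      rw [← univ_map_orderEmbOfFin K hK, Finset.sum_map]
      rfl
    have : ∑ t : Fin r, star A (eL s') (eK t) * u (eK t) = 0 := by
      rw [hsplit, hKcz, add_zero, hKsum] at h2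
      exact h2
    simpa [hM, Matrix.mulVec, dotProduct, Matrix.conjTranspose_apply, hx,
      Matrix.star_apply] using this
  have hx0 : x ≠ 0 := by
    obtain ⟨t0, ht0⟩ := Function.ne_iff.1 hv0
    have hw0 : w ≠ 0 := by
      intro hw0
      exact ht0 (by rw [← hwLc t0, hw0]; rfl)
    have hu0 : u ≠ 0 := by
      intro hu0
      apply hw0
      rw [← hwu, hu0, Matrix.mulVec_zero]
    obtain ⟨i, hi⟩ := Function.ne_iff.1 hu0
    have hiK : i ∈ K := by
      by_contra hiK
      exact hi (huKc i (Finset.mem_compl.2 hiK))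
    obtain ⟨t, rfl⟩ : ∃ t, eK t = i := by
      have hr := K.range_orderEmbOfFin hK
      have : i ∈ Set.range eK := by rw [heK, hr]; exact hiK
      exact this
    intro hx0
    exact hi (by simpa [hx] using congrFun hx0 t)
  have hdetM : M.det = 0 := Matrix.exists_mulVec_eq_zero_iff.1 ⟨x, hx0, hMx⟩
  rw [hM, Matrix.det_conjTranspose, star_eq_zero] at hdetM
  exact hdetM

theorem stmt_0 (N r : ℕ) (A : Matrix (Fin N) (Fin N) ℂ)
    (hA : A ∈ Matrix.unitaryGroup (Fin N) ℂ)
    (K L : Finset (Fin N)) (hK : K.card = r) (hL : L.card = r) :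
    IsUnit (A.submatrix (K.orderEmbOfFin hK) (L.orderEmbOfFin hL)).det ↔
      IsUnit (A.submatrix
        (Kᶜ.orderEmbOfFin (by simp [Finset.card_compl, hK]) : Fin (N - r) → Fin N)
        (Lᶜ.orderEmbOfFin (by simp [Finset.card_compl, hL]) : Fin (N - r) → Fin N)).det := by
  have hKc : Kᶜ.card = N - r := by simp [Finset.card_compl, hK]
  have hLc : Lᶜ.card = N - r := by simp [Finset.card_compl, hL]
  have hKcc : Kᶜᶜ.card = r := by simp [compl_compl, hK]
  have hLcc : Lᶜᶜ.card = r := by simp [compl_compl, hL]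
  simp only [isUnit_iff_ne_zero]
  constructor
  · intro hB hE
    exact hB (aux A hA K L hK hL hKc hLc hE)
  · intro hE hB
    refine hE (aux A hA Kᶜ Lᶜ hKc hLc hKcc hLcc ?_)
    rw [orderEmbOfFin_congr (compl_compl K) hKcc, orderEmbOfFin_congr (compl_compl L) hLcc]
    exact hB
end

section
/- Jacobi's identity for minors: if A is an invertible N×N complex matrix and K, L ⊆ {0,...,N-1} with |K| = |L|, then det A[K,L] = (-1)^(Σ_{k∈K} k + Σ_{ℓ∈L} ℓ) · det A · det((A⁻¹)[Lᶜ, Kᶜ]). -/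
set_option maxHeartbeats 1000000

open Equiv Finset

-- block lemma
lemma blockLemma {m n : Type} [Fintype m] [Fintype n] [DecidableEq m] [DecidableEq n]
    (M B : Matrix (m ⊕ n) (m ⊕ n) ℂ) (h : M * B = 1) :
    (M.toBlocks₁₁).det = M.det * (B.toBlocks₂₂).det := by
  have h' : Matrix.fromBlocks M.toBlocks₁₁ M.toBlocks₁₂ M.toBlocks₂₁ M.toBlocks₂₂ *
      Matrix.fromBlocks B.toBlocks₁₁ B.toBlocks₁₂ B.toBlocks₂₁ B.toBlocks₂₂ =
      Matrix.fromBlocks 1 0 0 1 := by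
    rw [Matrix.fromBlocks_toBlocks, Matrix.fromBlocks_toBlocks, Matrix.fromBlocks_one]; exact h
  rw [Matrix.fromBlocks_multiply] at h'
  have h12 : M.toBlocks₁₁ * B.toBlocks₁₂ + M.toBlocks₁₂ * B.toBlocks₂₂ = 0 := by
    have := congrArg Matrix.toBlocks₁₂ h'
    rwa [Matrix.toBlocks_fromBlocks₁₂, Matrix.toBlocks_fromBlocks₁₂] at this
  have h22 : M.toBlocks₂₁ * B.toBlocks₁₂ + M.toBlocks₂₂ * B.toBlocks₂₂ = 1 := by
    have := congrArg Matrix.toBlocks₂₂ h'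
    rwa [Matrix.toBlocks_fromBlocks₂₂, Matrix.toBlocks_fromBlocks₂₂] at this
  have key : M * Matrix.fromBlocks 1 B.toBlocks₁₂ 0 B.toBlocks₂₂ =
      Matrix.fromBlocks M.toBlocks₁₁ 0 M.toBlocks₂₁ 1 := by
    conv_lhs => rw [← Matrix.fromBlocks_toBlocks M]
    rw [Matrix.fromBlocks_multiply]
    rw [h12, h22]
    simp
  have hdet := congrArg Matrix.det key
  rw [Matrix.det_mul, Matrix.det_fromBlocks_zero₂₁, Matrix.det_fromBlocks_zero₁₂,
    Matrix.det_one] at hdet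
  simpa using hdet.symm

lemma emb_congr {N : ℕ} {s t : Finset (Fin N)} (h : s = t) {k : ℕ}
    (hs : s.card = k) (ht : t.card = k) :
    ⇑(s.orderEmbOfFin hs) = ⇑(t.orderEmbOfFin ht) := by subst h; rfl

lemma insert_emb {N n k : ℕ} {t : Finset (Fin N)} {a : Fin N} (ha : a ∉ t)
    (hs : t.card = n) (ht : (insert a t).card = k) (q : Fin k)
    (hq : (insert a t).orderEmbOfFin ht q = a) (j : Fin n) (j' : Fin k)
    (hj' : (j' : ℕ) = if (j : ℕ) < (q : ℕ) then (j : ℕ) else (j : ℕ) + 1) :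
    t.orderEmbOfFin hs j = (insert a t).orderEmbOfFin ht j' := by
  have hk : k = n + 1 := by rw [← ht, Finset.card_insert_of_notMem ha, hs]
  have huniq := Finset.orderEmbOfFin_unique (s := t) hs
    (f := fun x : Fin n => (insert a t).orderEmbOfFin ht
      ⟨if (x : ℕ) < (q : ℕ) then (x : ℕ) else (x : ℕ) + 1, by
        have := x.2; split <;> omega⟩)
    (fun x => by
      have hmem := Finset.orderEmbOfFin_mem (insert a t) ht
        ⟨if (x : ℕ) < (q : ℕ) then (x : ℕ) else (x : ℕ) + 1, by have := x.2; split <;> omega⟩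
      rcases Finset.mem_insert.mp hmem with heq | hmem'
      · exfalso
        have : (⟨if (x : ℕ) < (q : ℕ) then (x : ℕ) else (x : ℕ) + 1, by
            have := x.2; split <;> omega⟩ : Fin k) = q :=
          ((insert a t).orderEmbOfFin ht).injective (heq.trans hq.symm)
        have hv := congrArg Fin.val this
        simp only at hv
        split at hv <;> omega
      · exact hmem')
    (fun x y hxy => by
      apply ((insert a t).orderEmbOfFin ht).strictMono
      rw [Fin.lt_def] at hxy ⊢
      simp only
      split <;> split <;> omega)
  calc t.orderEmbOfFin hs j
      = (insert a t).orderEmbOfFin ht ⟨if (j : ℕ) < (q : ℕ) then (j : ℕ) else (j : ℕ) + 1, by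
          have := j.2; split <;> omega⟩ := (congrFun huniq j).symm
    _ = (insert a t).orderEmbOfFin ht j' := by congr 1; exact Fin.ext hj'.symm

lemma erase_emb {N r : ℕ} {K : Finset (Fin N)} (hK : K.card = r + 1)
    (hK' : (K.erase (K.orderEmbOfFin hK ⟨r, lt_add_one r⟩)).card = r) (i : Fin r) :
    (K.erase (K.orderEmbOfFin hK ⟨r, lt_add_one r⟩)).orderEmbOfFin hK' i
      = K.orderEmbOfFin hK (Fin.castSucc i) := by
  have huniq := Finset.orderEmbOfFin_unique (s := K.erase (K.orderEmbOfFin hK ⟨r, lt_add_one r⟩)) hK'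
    (f := fun x : Fin r => K.orderEmbOfFin hK (Fin.castSucc x))
    (fun x => by
      rw [Finset.mem_erase]
      refine ⟨fun heq => ?_, Finset.orderEmbOfFin_mem K hK _⟩
      have := (K.orderEmbOfFin hK).injective heq
      have hv := congrArg Fin.val this
      simp at hv
      omega)
    (fun x y hxy => (K.orderEmbOfFin hK).strictMono (by
      rw [Fin.lt_def] at hxy ⊢; simpa using hxy))
  exact (congrFun huniq i).symm

lemma e0_inl_val {N r : ℕ} (h : r + (N - r) = N) (i : Fin r) :
    (((finSumFinEquiv.trans (finCongr h))) (Sum.inl i) : Fin N).val = i.val := by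
  simp

lemma e0_inr_val {N r : ℕ} (h : r + (N - r) = N) (j : Fin (N - r)) :
    (((finSumFinEquiv.trans (finCongr h))) (Sum.inr j) : Fin N).val = r + j.val := by
  simp

lemma sign_split {N : ℕ} : ∀ (r : ℕ) (h : r + (N - r) = N) (K : Finset (Fin N))
    (hK : K.card = r) (hKc : Kᶜ.card = N - r),
    Equiv.Perm.sign ((finSumFinEquiv.trans (finCongr h)).symm.trans (finSumEquivOfFinset hK hKc)) =
      (-1) ^ (∑ k ∈ K, (k : ℕ) + ∑ i ∈ Finset.range r, i)
  | 0, h, K, hK, hKc => by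
    have hK0 : K = ∅ := Finset.card_eq_zero.mp hK
    subst hK0
    have hperm : (finSumFinEquiv.trans (finCongr h)).symm.trans (finSumEquivOfFinset hK hKc)
        = Equiv.refl (Fin N) := by
      apply Equiv.ext; intro x
      obtain ⟨y, rfl⟩ := (finSumFinEquiv.trans (finCongr h)).surjective x
      rcases y with i | j
      · exact i.elim0
      · rw [Equiv.trans_apply, Equiv.symm_apply_apply, Equiv.refl_apply, finSumEquivOfFinset_inr]
        have huniq := Finset.orderEmbOfFin_unique (s := (∅ : Finset (Fin N))ᶜ) hKc
          (f := fun j => (finSumFinEquiv.trans (finCongr h)) (Sum.inr j))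
          (fun x => by simp)
          (fun x y hxy => by
            rw [Fin.lt_def] at hxy ⊢
            rw [e0_inr_val, e0_inr_val]; omega)
        exact (congrFun huniq j).symm
    rw [hperm]
    simp
  | (r+1), h, K, hK, hKc => by
    classical
    have hrN : r + 1 ≤ N := by
      have := Finset.card_le_univ K
      simpa [hK] using this
    have h' : r + (N - r) = N := by omega
    set e0 : Fin r ⊕ Fin (N - r) ≃ Fin N := finSumFinEquiv.trans (finCongr h') with he0
    set e1 : Fin (r+1) ⊕ Fin (N - (r+1)) ≃ Fin N := finSumFinEquiv.trans (finCongr h) with he1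
    set m : Fin N := K.orderEmbOfFin hK ⟨r, lt_add_one r⟩ with hm
    have hmK : m ∈ K := Finset.orderEmbOfFin_mem K hK _
    set K' : Finset (Fin N) := K.erase m with hK'def
    have hK' : K'.card = r := by
      rw [hK'def, Finset.card_erase_of_mem hmK, hK]; omega
    have hK'c : K'ᶜ.card = N - r := by
      rw [Finset.card_compl, hK', Fintype.card_fin]
    have hmK'c : m ∈ K'ᶜ := by
      rw [Finset.mem_compl, hK'def]; exact Finset.notMem_erase m K
    obtain ⟨pp, hpp⟩ : ∃ p, K'ᶜ.orderEmbOfFin hK'c p = m := by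
      have hr := Finset.range_orderEmbOfFin K'ᶜ hK'c
      have : m ∈ Set.range ⇑(K'ᶜ.orderEmbOfFin hK'c) := by
        rw [hr]; exact hmK'c
      exact this
    have hltm : ∀ y ∈ K', y < m := by
      intro y hy
      have hyK : y ∈ K := Finset.mem_of_mem_erase hy
      have hyne : y ≠ m := Finset.ne_of_mem_erase hy
      have : y ∈ Set.range ⇑(K.orderEmbOfFin hK) := by
        rw [Finset.range_orderEmbOfFin]; exact hyK
      obtain ⟨j, rfl⟩ := this
      have hvne : j.val ≠ r := fun hv => hyne (by rw [hm]; congr 1; exact Fin.ext hv)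
      have : j < (⟨r, lt_add_one r⟩ : Fin (r+1)) := by
        rw [Fin.lt_def]; have := j.2; simp only; omega
      exact (K.orderEmbOfFin hK).strictMono this
    have hmval : (m : ℕ) = r + pp.val := by
      have himg : Finset.Iio m = K' ∪ (Finset.Iio pp).image ⇑(K'ᶜ.orderEmbOfFin hK'c) := by
        ext y
        simp only [Finset.mem_Iio, Finset.mem_union, Finset.mem_image]
        constructor
        · intro hy
          by_cases hyK' : y ∈ K'
          · exact Or.inl hyK'
          · have hyc : y ∈ K'ᶜ := Finset.mem_compl.mpr hyK'
            have : y ∈ Set.range ⇑(K'ᶜ.orderEmbOfFin hK'c) := by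
              rw [Finset.range_orderEmbOfFin]; exact hyc
            obtain ⟨j, rfl⟩ := this
            refine Or.inr ⟨j, ?_, rfl⟩
            have hiff := (K'ᶜ.orderEmbOfFin hK'c).strictMono.lt_iff_lt (a := j) (b := pp)
            rw [hpp] at hiff
            exact hiff.mp hy
        · rintro (hyK' | ⟨j, hj, rfl⟩)
          · exact hltm y hyK'
          · calc K'ᶜ.orderEmbOfFin hK'c j
                < K'ᶜ.orderEmbOfFin hK'c pp :=
                  (K'ᶜ.orderEmbOfFin hK'c).strictMono hj
              _ = m := hpp
      have hdisj : Disjoint K' ((Finset.Iio pp).image ⇑(K'ᶜ.orderEmbOfFin hK'c)) := by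
        rw [Finset.disjoint_left]; intro y hyK' hyimg
        obtain ⟨j, _, rfl⟩ := Finset.mem_image.mp hyimg
        exact (Finset.mem_compl.mp (Finset.orderEmbOfFin_mem K'ᶜ hK'c j)) hyK'
      have hcard := congrArg Finset.card himg
      rw [Fin.card_Iio, Finset.card_union_of_disjoint hdisj, hK',
        Finset.card_image_of_injective _ (K'ᶜ.orderEmbOfFin hK'c).injective, Fin.card_Iio] at hcard
      exact hcard
    obtain ⟨s, hs⟩ : ∃ s, N - r = s + 1 := ⟨N - (r+1), by omega⟩
    set ppF : Fin (s+1) := ⟨pp.val, by omega⟩ with hppF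
    set c₂ : Equiv.Perm (Fin (N - r)) := (finCongr hs.symm).permCongr (Fin.cycleRange ppF) with hc₂
    have hc₂val : ∀ z : Fin (N - r),
        (c₂ z).val = (Fin.cycleRange ppF (Fin.cast hs z)).val := by
      intro z
      rw [hc₂]
      simp only [Equiv.permCongr_apply, finCongr_symm, finCongr_apply, Fin.coe_cast]
    set τ : Equiv.Perm (Fin r ⊕ Fin (N - r)) := Equiv.Perm.sumCongr (Equiv.refl (Fin r)) c₂.symm with hτ
    set c : Equiv.Perm (Fin N) := e0.permCongr τ with hc
    set σ' : Equiv.Perm (Fin N) := e0.symm.trans (finSumEquivOfFinset hK' hK'c) with hσ'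
    -- compl relation
    have hcompl : K'ᶜ = insert m Kᶜ := by rw [hK'def, Finset.compl_erase]
    have hinsc : (insert m Kᶜ).card = N - r := by rw [← hcompl]; exact hK'c
    have hembc : ⇑(K'ᶜ.orderEmbOfFin hK'c) = ⇑((insert m Kᶜ).orderEmbOfFin hinsc) :=
      emb_congr hcompl _ _
    have hq' : (insert m Kᶜ).orderEmbOfFin hinsc pp = m := by
      rw [← congrFun hembc pp]; exact hpp
    have hmnc : m ∉ Kᶜ := by rw [Finset.mem_compl]; exact fun h'' => h'' hmK
    have hdecomp : e1.symm.trans (finSumEquivOfFinset hK hKc) = σ' * c := by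
      apply Equiv.ext; intro x
      obtain ⟨y, rfl⟩ := e0.surjective x
      have hcy : c (e0 y) = e0 (τ y) := by
        rw [hc]; simp [Equiv.permCongr_apply]
      rw [Equiv.Perm.mul_apply, hcy]
      rcases y with i | j
      · have hτi : τ (Sum.inl i) = Sum.inl i := rfl
        rw [hτi]
        have hσ'v : σ' (e0 (Sum.inl i)) = K'.orderEmbOfFin hK' i := by
          rw [hσ']
          simp only [Equiv.trans_apply, Equiv.symm_apply_apply]
          rw [finSumEquivOfFinset_inl]
        rw [hσ'v]
        have he01 : e0 (Sum.inl i) = e1 (Sum.inl (Fin.castSucc i)) := by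
          apply Fin.ext
          rw [he0, he1]
          conv_lhs => rw [e0_inl_val]
          conv_rhs => rw [e0_inl_val]
          rfl
        rw [he01]
        simp only [Equiv.trans_apply, Equiv.symm_apply_apply]
        rw [finSumEquivOfFinset_inl]
        exact (erase_emb hK hK' i).symm
      · have hτj : τ (Sum.inr j) = Sum.inr (c₂.symm j) := rfl
        rw [hτj]
        have hσ'v : σ' (e0 (Sum.inr (c₂.symm j))) = K'ᶜ.orderEmbOfFin hK'c (c₂.symm j) := by
          rw [hσ']
          simp only [Equiv.trans_apply, Equiv.symm_apply_apply]
          rw [finSumEquivOfFinset_inr]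
        rw [hσ'v]
        by_cases hj0 : (j : ℕ) = 0
        · have hcs : c₂.symm j = pp := by
            rw [Equiv.symm_apply_eq]
            apply Fin.ext
            rw [hc₂val pp]
            have hcast : Fin.cast hs pp = ppF := rfl
            rw [hcast, Fin.cycleRange_self]
            simp [hj0]
          conv_rhs => rw [hcs, hpp]
          have he0j : e0 (Sum.inr j) = e1 (Sum.inl (Fin.last r)) := by
            apply Fin.ext
            rw [he0, he1]
            conv_lhs => rw [e0_inr_val]
            conv_rhs => rw [e0_inl_val]
            simp [hj0]
          rw [he0j]
          simp only [Equiv.trans_apply, Equiv.symm_apply_apply]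
          rw [finSumEquivOfFinset_inl]
          rw [hm]
          rfl
        · obtain ⟨j₀, hj₀⟩ : ∃ t, j.val = t + 1 := ⟨j.val - 1, by omega⟩
          have hj₀s : j₀ < s := by have := j.2; omega
          have he0j : e0 (Sum.inr j) = e1 (Sum.inr ⟨j₀, by omega⟩) := by
            apply Fin.ext
            rw [he0, he1]
            conv_lhs => rw [e0_inr_val]
            conv_rhs => rw [e0_inr_val]
            simp
            omega
          rw [he0j]
          simp only [Equiv.trans_apply, Equiv.symm_apply_apply]
          rw [finSumEquivOfFinset_inr]
          by_cases hjp : j₀ < pp.val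
          · have hcs : c₂.symm j = ⟨j₀, by omega⟩ := by
              rw [Equiv.symm_apply_eq]
              apply Fin.ext
              rw [hc₂val]
              have hlt : (Fin.cast hs (⟨j₀, by omega⟩ : Fin (N - r))) < ppF := by
                rw [Fin.lt_def]; simpa using hjp
              rw [Fin.cycleRange_of_lt hlt]
              rw [Fin.val_add_one_of_lt (by rw [Fin.lt_def]; simpa using hj₀s)]
              simpa using hj₀
            conv_rhs => rw [hcs]
            exact (insert_emb hmnc hKc hinsc pp hq' ⟨j₀, by omega⟩ ⟨j₀, by omega⟩
              (by simp [hjp])).trans (congrFun hembc ⟨j₀, by omega⟩).symm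
          · have hcs : c₂.symm j = j := by
              rw [Equiv.symm_apply_eq]
              apply Fin.ext
              rw [hc₂val]
              have hgt : ppF < Fin.cast hs j := by
                rw [Fin.lt_def]; simp only [Fin.coe_cast]; show pp.val < j.val; omega
              rw [Fin.cycleRange_of_gt hgt]
              rfl
            conv_rhs => rw [hcs]
            exact (insert_emb hmnc hKc hinsc pp hq' ⟨j₀, by omega⟩ j
              (by simp [hjp, hj₀])).trans (congrFun hembc j).symm
    rw [hdecomp, map_mul]
    rw [sign_split r h' K' hK' hK'c]
    have hsc : Equiv.Perm.sign c = (-1) ^ pp.val := by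
      rw [hc, Equiv.Perm.sign_permCongr, hτ, Equiv.Perm.sign_sumCongr]
      have h2 : c₂.symm = c₂⁻¹ := rfl
      rw [h2, Equiv.Perm.sign_inv, hc₂, Equiv.Perm.sign_permCongr, Fin.sign_cycleRange]
      simp [hppF]
    have hsum : (m : ℕ) + ∑ k ∈ K', (k : ℕ) = ∑ k ∈ K, (k : ℕ) :=
      Finset.add_sum_erase K _ hmK
    rw [hsc, Finset.sum_range_succ, ← hsum, hmval]
    have hpow : ∀ a b : ℕ, (-1 : ℤˣ) ^ (a + 2 * b) = (-1) ^ a := by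
      intro a b; rw [pow_add, pow_mul]; norm_num
    have hexp : (r + pp.val + ∑ k ∈ K', (k : ℕ)) + (∑ i ∈ Finset.range r, i + r)
        = (((∑ k ∈ K', (k : ℕ)) + ∑ i ∈ Finset.range r, i) + pp.val) + 2 * r := by ring
    rw [hexp, hpow, pow_add, pow_add, pow_add]



theorem stmt_1 (N r : ℕ) (A : Matrix (Fin N) (Fin N) ℂ) (hA : IsUnit A.det)
    (K L : Finset (Fin N)) (hK : K.card = r) (hL : L.card = r) :
    (A.submatrix (K.orderEmbOfFin hK) (L.orderEmbOfFin hL)).det =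
      (-1 : ℂ) ^ (∑ k ∈ K, (k : ℕ) + ∑ l ∈ L, (l : ℕ)) * A.det *
      ((A⁻¹).submatrix
        (Lᶜ.orderEmbOfFin (by simp [Finset.card_compl, hL]) : Fin (N - r) → Fin N)
        (Kᶜ.orderEmbOfFin (by simp [Finset.card_compl, hK]) : Fin (N - r) → Fin N)).det := by
  classical
  have hrN : r ≤ N := by
    have := Finset.card_le_univ K
    simpa [hK] using this
  have h : r + (N - r) = N := by omega
  have hKc : Kᶜ.card = N - r := by simp [Finset.card_compl, hK]
  have hLc : Lᶜ.card = N - r := by simp [Finset.card_compl, hL]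
  set e0 : Fin r ⊕ Fin (N - r) ≃ Fin N := finSumFinEquiv.trans (finCongr h) with he0
  set eK := finSumEquivOfFinset hK hKc with heK
  set eL := finSumEquivOfFinset hL hLc with heL
  set M : Matrix (Fin r ⊕ Fin (N - r)) (Fin r ⊕ Fin (N - r)) ℂ := A.submatrix ⇑eK ⇑eL with hM
  set B : Matrix (Fin r ⊕ Fin (N - r)) (Fin r ⊕ Fin (N - r)) ℂ := (A⁻¹).submatrix ⇑eL ⇑eK with hB
  have hMB : M * B = 1 := by
    rw [hM, hB, Matrix.submatrix_mul_equiv, Matrix.mul_nonsing_inv _ hA,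
      Matrix.submatrix_one_equiv]
  have hblock := blockLemma M B hMB
  have hLHS : A.submatrix (⇑(K.orderEmbOfFin hK)) (⇑(L.orderEmbOfFin hL)) = M.toBlocks₁₁ := by
    ext i j
    simp only [hM, Matrix.toBlocks₁₁, Matrix.submatrix_apply, Matrix.of_apply, heK, heL,
      finSumEquivOfFinset_inl]
  have hRHS : ((A⁻¹).submatrix
        (⇑(Lᶜ.orderEmbOfFin hLc)) (⇑(Kᶜ.orderEmbOfFin hKc))) = B.toBlocks₂₂ := by
    ext i j
    simp only [hB, Matrix.toBlocks₂₂, Matrix.submatrix_apply, Matrix.of_apply, heK, heL,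
      finSumEquivOfFinset_inr]
  have hMdecomp : M = (A.submatrix ⇑eK ⇑eK).submatrix id ⇑(eL.trans eK.symm) := by
    ext i j
    simp [hM, Matrix.submatrix_apply]
  have hdetM : M.det = ((Equiv.Perm.sign (eL.trans eK.symm) : ℤ) : ℂ) * A.det := by
    rw [hMdecomp, Matrix.det_permute', Matrix.det_submatrix_equiv_self]
  set σK : Equiv.Perm (Fin N) := e0.symm.trans eK with hσK
  set σL : Equiv.Perm (Fin N) := e0.symm.trans eL with hσL
  have hfact : eL.trans eK.symm = (e0.trans eK.symm) * (eL.trans e0.symm) := by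
    apply Equiv.ext; intro x
    simp [Equiv.Perm.mul_apply]
  have h1 : e0.trans eK.symm = (Equiv.permCongr e0.symm) σK⁻¹ := by
    apply Equiv.ext; intro x
    simp [Equiv.permCongr_apply, hσK, Equiv.Perm.inv_def, Equiv.symm_trans_apply]
  have h2 : eL.trans e0.symm = (Equiv.permCongr e0.symm) σL := by
    apply Equiv.ext; intro x
    simp [Equiv.permCongr_apply, hσL]
  have hsK := sign_split r h K hK hKc
  have hsL := sign_split r h L hL hLc
  have hsign : Equiv.Perm.sign (eL.trans eK.symm)
      = (-1 : ℤˣ) ^ (∑ k ∈ K, (k : ℕ) + ∑ l ∈ L, (l : ℕ)) := by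
    rw [hfact, map_mul, h1, h2, Equiv.Perm.sign_permCongr, Equiv.Perm.sign_permCongr,
      Equiv.Perm.sign_inv]
    rw [hσK, hσL, hsK, hsL]
    have hpow : ∀ a b : ℕ, (-1 : ℤˣ) ^ (a + 2 * b) = (-1) ^ a := by
      intro a b; rw [pow_add, pow_mul]; norm_num
    have hexp : (∑ k ∈ K, (k : ℕ) + ∑ i ∈ Finset.range r, i)
          + (∑ l ∈ L, (l : ℕ) + ∑ i ∈ Finset.range r, i)
        = (∑ k ∈ K, (k : ℕ) + ∑ l ∈ L, (l : ℕ)) + 2 * ∑ i ∈ Finset.range r, i := by ring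
    rw [← pow_add, hexp, hpow]
  rw [hLHS, hblock, hdetM, ← hRHS, hsign]
  congr 2
  push_cast
  simp
end

section
/- Let p and q be distinct primes and let f(X) ∈ ℤ[X] have nonnegative integer coefficients with q > f(1). If the reduction of f modulo q is divisible by 1 + X + X² + ⋯ + X^{p-1} in ℤ/qℤ[X], then f(X) is divisible by 1 + X + X² + ⋯ + X^{p-1} in ℤ[X]. -/
open Polynomial

lemma geom_coeff_aux {R : Type*} [Semiring R] (n j : ℕ) :
    (∑ i ∈ Finset.range n, (X : R[X]) ^ i).coeff j = if j < n then 1 else 0 := by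
  rw [finset_sum_coeff]
  simp only [coeff_X_pow]
  rw [Finset.sum_ite_eq (Finset.range n) j (fun _ => (1 : R))]
  simp

theorem stmt_2 (p q : ℕ) (hp : p.Prime) (hq : q.Prime) (hpq : p ≠ q)
    (f : Polynomial ℤ) (hf : ∀ i, 0 ≤ f.coeff i) (hq1 : f.eval 1 < (q : ℤ))
    (hdvd : (∑ i ∈ Finset.range p, (X : Polynomial (ZMod q)) ^ i) ∣
      f.map (Int.castRingHom (ZMod q))) :
    (∑ i ∈ Finset.range p, (X : Polynomial ℤ) ^ i) ∣ f := by
  classical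
  haveI : Fact q.Prime := ⟨hq⟩
  have hp0 : 0 < p := hp.pos
  set S : Polynomial ℤ := ∑ i ∈ Finset.range p, (X : Polynomial ℤ) ^ i with hS
  set N := f.natDegree + 1 with hN
  set fstar : Polynomial ℤ :=
    ∑ i ∈ Finset.range N, C (f.coeff i) * X ^ (i % p) with hfstar
  -- S divides X^p - 1
  have hS1 : S ∣ (X : Polynomial ℤ) ^ p - 1 := ⟨X - 1, (geom_sum_mul X p).symm⟩
  -- S divides X^i - X^(i % p)
  have hSi : ∀ i : ℕ, S ∣ (X : Polynomial ℤ) ^ i - X ^ (i % p) := by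
    intro i
    have h : (X : Polynomial ℤ) ^ i - X ^ (i % p)
        = X ^ (i % p) * (((X : Polynomial ℤ) ^ p) ^ (i / p) - 1) := by
      rw [mul_sub, mul_one, ← pow_mul, ← pow_add]
      congr 2
      exact (Nat.mod_add_div i p).symm
    rw [h]
    exact Dvd.dvd.mul_left
      (hS1.trans (by simpa using sub_dvd_pow_sub_pow ((X : Polynomial ℤ) ^ p) 1 (i / p))) _
  -- S divides f - fstar
  have hsub : S ∣ f - fstar := by
    have hrw : f - fstar = ∑ i ∈ Finset.range N, C (f.coeff i) * (X ^ i - X ^ (i % p)) := by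
      conv_lhs => rw [f.as_sum_range' N (by omega)]
      rw [hfstar, ← Finset.sum_sub_distrib]
      apply Finset.sum_congr rfl
      intro i _
      simp only [mul_sub, C_mul_X_pow_eq_monomial]
    rw [hrw]
    exact Finset.dvd_sum fun i _ => Dvd.dvd.mul_left (hSi i) _
  -- coefficients of fstar
  have hcoeff : ∀ j, fstar.coeff j
      = ∑ i ∈ (Finset.range N).filter (fun i => i % p = j), f.coeff i := by
    intro j
    rw [hfstar, finset_sum_coeff, Finset.sum_filter]
    apply Finset.sum_congr rfl
    intro i _
    rw [coeff_C_mul, coeff_X_pow]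
    by_cases h : i % p = j
    · rw [if_pos h.symm, if_pos h, mul_one]
    · rw [if_neg (Ne.symm h), if_neg h, mul_zero]
  have hcoeff_nonneg : ∀ j, 0 ≤ fstar.coeff j := by
    intro j
    rw [hcoeff]
    exact Finset.sum_nonneg fun i _ => hf i
  have heval : f.eval 1 = ∑ i ∈ Finset.range N, f.coeff i := by
    conv_lhs => rw [f.as_sum_range' N (by omega)]
    simp [eval_finset_sum, eval_monomial]
  have hcoeff_le : ∀ j, fstar.coeff j ≤ f.eval 1 := by
    intro j
    rw [hcoeff, heval]
    exact Finset.sum_le_sum_of_subset_of_nonneg (Finset.filter_subset _ _)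
      (fun i _ _ => hf i)
  -- degree of fstar
  have hdeg : fstar.natDegree < p := by
    have h : fstar.natDegree ≤ p - 1 := by
      rw [hfstar]
      apply Polynomial.natDegree_sum_le_of_forall_le
      intro i _
      apply (natDegree_C_mul_le _ _).trans
      simp only [natDegree_X_pow]
      have := Nat.mod_lt i hp0
      omega
    omega
  -- map to ZMod q
  have hmapS : S.map (Int.castRingHom (ZMod q))
      = ∑ i ∈ Finset.range p, (X : Polynomial (ZMod q)) ^ i := by
    simp [hS, Polynomial.map_sum]
  have hSbar_ne : (∑ i ∈ Finset.range p, (X : Polynomial (ZMod q)) ^ i) ≠ 0 := by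
    intro h0
    have h1 := geom_coeff_aux (R := ZMod q) p (p - 1)
    rw [h0] at h1
    simp only [coeff_zero] at h1
    rw [if_pos (by omega)] at h1
    exact zero_ne_one h1
  have hSbar_deg : (∑ i ∈ Finset.range p, (X : Polynomial (ZMod q)) ^ i).natDegree
      = p - 1 := by
    apply le_antisymm
    · apply Polynomial.natDegree_sum_le_of_forall_le
      intro i hi
      simp only [natDegree_X_pow]
      have := Finset.mem_range.mp hi
      omega
    · apply le_natDegree_of_ne_zero
      rw [geom_coeff_aux, if_pos (by omega)]
      exact one_ne_zero
  -- S̄ divides map fstar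
  have hdvd2 : (∑ i ∈ Finset.range p, (X : Polynomial (ZMod q)) ^ i) ∣
      fstar.map (Int.castRingHom (ZMod q)) := by
    have h1 : (∑ i ∈ Finset.range p, (X : Polynomial (ZMod q)) ^ i) ∣
        (f - fstar).map (Int.castRingHom (ZMod q)) := by
      rw [← hmapS]
      exact Polynomial.map_dvd _ hsub
    have h2 := dvd_sub hdvd h1
    rwa [Polynomial.map_sub, sub_sub_cancel] at h2
  obtain ⟨g, hg⟩ := hdvd2
  -- g is a constant
  obtain ⟨c, rfl⟩ : ∃ c, g = C c := by
    rcases eq_or_ne g 0 with h | h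
    · exact ⟨0, by rw [h, map_zero]⟩
    · refine ⟨g.coeff 0, Polynomial.eq_C_of_natDegree_le_zero ?_⟩
      have hmul := Polynomial.natDegree_mul hSbar_ne h
      have hle : (fstar.map (Int.castRingHom (ZMod q))).natDegree ≤ p - 1 :=
        Polynomial.natDegree_map_le.trans (by omega)
      rw [hg, hmul, hSbar_deg] at hle
      omega
  -- all coefficients of fstar are congruent mod q
  have hcong : ∀ j < p, ((fstar.coeff j : ZMod q)) = c := by
    intro j hj
    have h : (fstar.map (Int.castRingHom (ZMod q))).coeff j = c := by
      rw [hg, coeff_mul_C, geom_coeff_aux, if_pos hj, one_mul]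
    rwa [Polynomial.coeff_map] at h
  have hEq : ∀ j < p, fstar.coeff j = fstar.coeff 0 := by
    intro j hj
    have h1 : ((fstar.coeff 0 : ZMod q)) = ((fstar.coeff j : ZMod q)) := by
      rw [hcong j hj, hcong 0 hp0]
    have h2 : (q : ℤ) ∣ fstar.coeff j - fstar.coeff 0 :=
      (ZMod.intCast_eq_intCast_iff_dvd_sub _ _ _).mp h1
    have hb1 := hcoeff_nonneg j
    have hb2 := hcoeff_nonneg 0
    have hb3 := hcoeff_le j
    have hb4 := hcoeff_le 0
    have h3 : fstar.coeff j - fstar.coeff 0 = 0 :=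
      Int.eq_zero_of_abs_lt_dvd h2 (abs_lt.mpr ⟨by linarith, by linarith⟩)
    linarith
  -- fstar = C (coeff 0) * S
  have hfstar_eq : fstar = C (fstar.coeff 0) * S := by
    ext j
    rw [coeff_C_mul, hS, geom_coeff_aux]
    by_cases hj : j < p
    · rw [if_pos hj, mul_one, hEq j hj]
    · rw [if_neg hj, mul_zero]
      exact Polynomial.coeff_eq_zero_of_natDegree_lt (by omega)
  have hSfstar : S ∣ fstar := by
    rw [hfstar_eq]
    exact dvd_mul_left _ _
  have hfin := dvd_add hsub hSfstar
  rwa [sub_add_cancel] at hfin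
end

section
/- Chebotarev's theorem: if p is a prime and ω = e^{-2πi/p}, then for any subsets A, B ⊆ ℤ/pℤ with |A| = |B|, the determinant of the matrix (ω^{ab})_{a∈A, b∈B} is nonzero. -/
open Finset Polynomial


private lemma sum_range_card_le (S : Finset ℕ) : ∑ i ∈ Finset.range S.card, i ≤ ∑ i ∈ S, i := by
  induction S using Finset.strongInduction with
  | _ S ih =>
    rcases S.eq_empty_or_nonempty with rfl | hS
    · simp
    · have hmax := S.max'_mem hS
      set M := S.max' hS with hM
      have hcard : S.card ≤ M + 1 := by
        have hsub : S ⊆ Finset.range (M + 1) := fun x hx =>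
          Finset.mem_range.2 (Nat.lt_succ_of_le (S.le_max' x hx))
        simpa using Finset.card_le_card hsub
      have herase := ih (S.erase M) (Finset.erase_ssubset hmax)
      have hce : (S.erase M).card = S.card - 1 := Finset.card_erase_of_mem hmax
      have h1 : 1 ≤ S.card := Finset.card_pos.2 hS
      obtain ⟨c, hc⟩ : ∃ c, S.card = c + 1 := ⟨S.card - 1, by omega⟩
      have key : ∑ i ∈ S.erase M, i + M = ∑ i ∈ S, i := Finset.sum_erase_add S _ hmax
      rw [hce, hc] at herase
      rw [hc, Finset.sum_range_succ]
      simp only [Nat.add_sub_cancel] at herase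
      have hMc : c ≤ M := by omega
      omega

private lemma sum_le_of_injective {r : ℕ} {k : Fin r → ℕ} (hk : Function.Injective k) :
    ∑ j : Fin r, (j : ℕ) ≤ ∑ j, k j := by
  have himg : (Finset.univ.image k).card = r := by
    rw [Finset.card_image_of_injective _ hk, Finset.card_univ, Fintype.card_fin]
  have h1 := sum_range_card_le (Finset.univ.image k)
  rw [himg] at h1
  have h2 : ∑ i ∈ Finset.univ.image k, i = ∑ j, k j :=
    Finset.sum_image (fun x _ y _ h => hk h)
  have h3 : ∑ j : Fin r, (j : ℕ) = ∑ i ∈ Finset.range r, i :=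
    Fin.sum_univ_eq_sum_range (fun i => i) r
  omega

private lemma eq_of_le_of_sum {r : ℕ} {k m : Fin r → ℕ} (hk : Function.Injective k)
    (hle : ∀ j, k j ≤ m j) (hsum : ∑ j, m j ≤ ∑ j : Fin r, (j : ℕ)) : k = m := by
  have h1 := sum_le_of_injective hk
  funext j
  by_contra hne
  have hlt : k j < m j := lt_of_le_of_ne (hle j) hne
  have := Finset.sum_lt_sum (fun i _ => hle i) ⟨j, Finset.mem_univ j, hlt⟩
  omega

private lemma lt_of_injective_sum {r : ℕ} {m : Fin r → ℕ} (hm : Function.Injective m)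
    (hsum : ∑ j, m j = ∑ j : Fin r, (j : ℕ)) (j0 : Fin r) : m j0 < r := by
  set S := Finset.univ.image m with hS
  have hmem : m j0 ∈ S := Finset.mem_image_of_mem m (Finset.mem_univ j0)
  have hcard : S.card = r := by
    rw [hS, Finset.card_image_of_injective _ hm, Finset.card_univ, Fintype.card_fin]
  have hsumS : ∑ i ∈ S, i = ∑ j, m j := Finset.sum_image (fun x _ y _ h => hm h)
  have h1 := sum_range_card_le (S.erase (m j0))
  have hce : (S.erase (m j0)).card = r - 1 := by rw [Finset.card_erase_of_mem hmem, hcard]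
  have key : ∑ i ∈ S.erase (m j0), i + m j0 = ∑ i ∈ S, i := Finset.sum_erase_add S _ hmem
  have hr : 0 < r := j0.pos
  obtain ⟨c, hc⟩ : ∃ c, r = c + 1 := ⟨r - 1, by omega⟩
  have hrc : r - 1 = c := by omega
  rw [hce, hrc] at h1
  have hN : ∑ j : Fin r, (j : ℕ) = ∑ i ∈ Finset.range c, i + c := by
    rw [Fin.sum_univ_eq_sum_range (fun i => i) r, hc, Finset.sum_range_succ]
  omega


private lemma det_expand {R : Type*} [CommRing R] {r : ℕ} (w : Fin r → Finset ℕ)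
    (g : Fin r → ℕ → Fin r → R) :
    Matrix.det (Matrix.of fun i j => ∑ m ∈ w j, g j m i)
      = ∑ m ∈ Fintype.piFinset w, Matrix.det (Matrix.of fun i j => g j (m j) i) := by
  have h := (Matrix.detRowAlternating (R := R) (n := Fin r)).toMultilinearMap.map_sum_finset
    (A := w) (g := g)
  have h1 : Matrix.det (Matrix.of fun i j => ∑ m ∈ w j, g j m i)
      = Matrix.detRowAlternating (fun j => ∑ m ∈ w j, g j m) := by
    rw [← Matrix.det_transpose]
    congr 1
    ext j i
    simp [Matrix.transpose_apply]
  have h2 : ∀ m : Fin r → ℕ, Matrix.det (Matrix.of fun i j => g j (m j) i)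
      = Matrix.detRowAlternating (fun j => g j (m j)) := by
    intro m
    rw [← Matrix.det_transpose]
    congr 1
  rw [h1]
  calc (Matrix.detRowAlternating (R := R) (n := Fin r)).toMultilinearMap
        (fun j => ∑ m ∈ w j, g j m)
      = ∑ m ∈ Fintype.piFinset w,
          (Matrix.detRowAlternating (R := R) (n := Fin r)).toMultilinearMap
            (fun j => g j (m j)) := h
    _ = _ := by
        refine Finset.sum_congr rfl fun m _ => ?_
        rw [h2 m]
        rfl

private lemma det_pow_zero_of_not_injective {R : Type*} [CommRing R] {r : ℕ}
    (u : ℕ → Fin r → R) {k : Fin r → ℕ} (hk : ¬ Function.Injective k) :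
    Matrix.det (Matrix.of fun i j => u (k j) i) = 0 := by
  rw [← Matrix.det_transpose]
  simp only [Function.Injective, not_forall] at hk
  obtain ⟨j1, j2, heq, hne⟩ := hk
  exact Matrix.det_zero_of_row_eq hne (by ext i; simp [Matrix.transpose_apply, heq])

private def Cmat {r : ℕ} (α β : Fin r → ℕ) (m : Fin r → ℕ) : Matrix (Fin r) (Fin r) ℤ :=
  Matrix.of fun i j => ((α i * β j).choose (m j) : ℤ)

private lemma key_expansion {r : ℕ} (α β m : Fin r → ℕ) :
    (∏ j, ((m j).factorial : ℤ)) * (Cmat α β m).det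
      = ∑ k ∈ Fintype.piFinset (fun j => Finset.range (m j + 1)),
          (∏ j, ((descPochhammer ℤ (m j)).coeff (k j) * (β j : ℤ) ^ (k j)))
            * Matrix.det (Matrix.of fun i j : Fin r => (α i : ℤ) ^ (k j)) := by
  have h1 : (∏ j, ((m j).factorial : ℤ)) * (Cmat α β m).det
      = Matrix.det (Matrix.of fun i j => ((m j).factorial : ℤ) * Cmat α β m i j) :=
    (Matrix.det_mul_row _ _).symm
  have hentry : ∀ (i j : Fin r), ((m j).factorial : ℤ) * Cmat α β m i j
      = ∑ k ∈ Finset.range (m j + 1),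
          ((descPochhammer ℤ (m j)).coeff k * (β j : ℤ) ^ k) * (α i : ℤ) ^ k := by
    intro i j
    have hdesc : ((m j).factorial : ℤ) * Cmat α β m i j
        = (((α i * β j).descFactorial (m j) : ℕ) : ℤ) := by
      rw [Nat.descFactorial_eq_factorial_mul_choose]
      show ((m j).factorial : ℤ) * (((α i * β j).choose (m j) : ℕ) : ℤ) = _
      push_cast
      ring
    rw [hdesc, ← descPochhammer_eval_eq_descFactorial ℤ (α i * β j) (m j),
      Polynomial.eval_eq_sum_range, descPochhammer_natDegree]
    push_cast
    refine Finset.sum_congr rfl fun k _ => ?_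
    ring
  rw [h1]
  have h2 : (Matrix.of fun i j => ((m j).factorial : ℤ) * Cmat α β m i j)
      = Matrix.of fun i j => ∑ k ∈ Finset.range (m j + 1),
          (fun (j : Fin r) (k : ℕ) (i : Fin r) =>
            ((descPochhammer ℤ (m j)).coeff k * (β j : ℤ) ^ k) * (α i : ℤ) ^ k) j k i := by
    ext i j
    exact hentry i j
  rw [h2, det_expand]
  refine Finset.sum_congr rfl fun k _ => ?_
  exact Matrix.det_mul_row _ _
private lemma Cmat_det_eq_zero {r : ℕ} (α β : Fin r → ℕ) {m : Fin r → ℕ}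
    (h : ∀ k : Fin r → ℕ, Function.Injective k → (∀ j, k j ≤ m j) → False) :
    (Cmat α β m).det = 0 := by
  have hK : (∏ j, ((m j).factorial : ℤ)) ≠ 0 := by
    refine Finset.prod_ne_zero_iff.2 fun j _ => ?_
    exact_mod_cast (m j).factorial_ne_zero
  have hkey := key_expansion α β m
  have hz : ∑ k ∈ Fintype.piFinset (fun j => Finset.range (m j + 1)),
      (∏ j, ((descPochhammer ℤ (m j)).coeff (k j) * (β j : ℤ) ^ (k j)))
        * Matrix.det (Matrix.of fun i j : Fin r => (α i : ℤ) ^ (k j)) = 0 := by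
    refine Finset.sum_eq_zero fun k hk => ?_
    have hle : ∀ j, k j ≤ m j := fun j =>
      Nat.lt_succ_iff.mp (Finset.mem_range.mp (Fintype.mem_piFinset.mp hk j))
    have hninj : ¬ Function.Injective k := fun hinj => h k hinj hle
    rw [det_pow_zero_of_not_injective (fun t i => (α i : ℤ) ^ t) hninj, mul_zero]
  rw [hz] at hkey
  exact (mul_eq_zero.mp hkey).resolve_left hK

private lemma Cmat_det_perm {r : ℕ} (α β : Fin r → ℕ) (σ : Equiv.Perm (Fin r)) :
    (∏ j : Fin r, ((j : ℕ).factorial : ℤ)) * (Cmat α β (fun j => (σ j : ℕ))).det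
      = (Equiv.Perm.sign σ : ℤ) * (∏ j, (β j : ℤ) ^ (σ j : ℕ))
          * (Matrix.vandermonde (fun i => (α i : ℤ))).det := by
  have hfac : ∏ j : Fin r, ((j : ℕ).factorial : ℤ)
      = ∏ j : Fin r, ((σ j : ℕ).factorial : ℤ) :=
    (Equiv.prod_comp σ (fun j : Fin r => ((j : ℕ).factorial : ℤ))).symm
  rw [hfac, key_expansion]
  set m : Fin r → ℕ := fun j => (σ j : ℕ) with hm
  have hminj : Function.Injective m := fun x y h => σ.injective (Fin.val_injective h)
  have hmsum : ∑ j, m j = ∑ j : Fin r, (j : ℕ) := Equiv.sum_comp σ (fun j : Fin r => (j : ℕ))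
  rw [Finset.sum_eq_single m]
  · have hcoeff : ∀ j, (descPochhammer ℤ (m j)).coeff (m j) = 1 := by
      intro j
      have h1 := monic_descPochhammer ℤ (m j)
      have h2 : (descPochhammer ℤ (m j)).natDegree = m j := descPochhammer_natDegree ℤ (m j)
      simpa [h2] using h1.coeff_natDegree
    simp only [show ∀ j, (descPochhammer ℤ (σ j : ℕ)).coeff (m j) = 1 from hcoeff, one_mul]
    have hsub : (Matrix.of fun i j : Fin r => (α i : ℤ) ^ (m j))
        = (Matrix.vandermonde (fun i => (α i : ℤ))).submatrix id σ := by
      ext i j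
      simp [Matrix.vandermonde, Matrix.submatrix, hm]
    rw [hsub, Matrix.det_permute']
    push_cast
    ring
  · intro k hk hne
    by_cases hinj : Function.Injective k
    · exfalso
      have hle : ∀ j, k j ≤ m j := fun j =>
        Nat.lt_succ_iff.mp (Finset.mem_range.mp (Fintype.mem_piFinset.mp hk j))
      exact hne (eq_of_le_of_sum hinj hle (le_of_eq hmsum))
    · rw [det_pow_zero_of_not_injective (fun t i => (α i : ℤ) ^ t) hinj, mul_zero]
  · intro hnotmem
    exact absurd (Fintype.mem_piFinset.2 fun j => Finset.mem_range.2 (Nat.lt_succ_self _)) hnotmem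
private lemma Qpoly_coeff {r : ℕ} (α β : Fin r → ℕ) (D : ℕ) (hD : ∀ i j, α i * β j < D) (M : ℕ) :
    (Matrix.det (Matrix.of fun i j : Fin r => (X + 1 : ℤ[X]) ^ (α i * β j))).coeff M
      = ∑ m ∈ (Fintype.piFinset (fun _ : Fin r => Finset.range D)).filter
            (fun m => ∑ j, m j = M), (Cmat α β m).det := by
  have hentry : ∀ i j : Fin r, (X + 1 : ℤ[X]) ^ (α i * β j)
      = ∑ m ∈ Finset.range D,
          (fun (j' : Fin r) (m : ℕ) (i' : Fin r) =>
            Polynomial.C (((α i' * β j').choose m : ℕ) : ℤ) * X ^ m) j m i := by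
    intro i j
    simp only []
    rw [add_pow]
    have hsub : Finset.range (α i * β j + 1) ⊆ Finset.range D :=
      Finset.range_subset_range.2 (hD i j)
    rw [← Finset.sum_subset hsub]
    · refine Finset.sum_congr rfl fun k hk => ?_
      rw [one_pow, mul_one, mul_comm, Polynomial.C_eq_natCast]
    · intro k _ hk
      have : α i * β j < k := by
        simp only [Finset.mem_range, not_lt] at hk ⊢
        omega
      rw [Nat.choose_eq_zero_of_lt this]
      simp
  have hdet : (Matrix.of fun i j : Fin r => (X + 1 : ℤ[X]) ^ (α i * β j))
      = Matrix.of fun i j => ∑ m ∈ Finset.range D,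
          (fun (j' : Fin r) (m : ℕ) (i' : Fin r) =>
            Polynomial.C (((α i' * β j').choose m : ℕ) : ℤ) * X ^ m) j m i := by
    exact Matrix.ext fun i j => hentry i j
  rw [hdet, det_expand]
  have hterm : ∀ m : Fin r → ℕ,
      Matrix.det (Matrix.of fun i j : Fin r =>
          Polynomial.C (((α i * β j).choose (m j) : ℕ) : ℤ) * X ^ (m j))
        = Polynomial.C ((Cmat α β m).det) * X ^ (∑ j, m j) := by
    intro m
    have h1 : (Matrix.of fun i j : Fin r =>
        Polynomial.C (((α i * β j).choose (m j) : ℕ) : ℤ) * X ^ (m j))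
        = Matrix.of fun i j => (X : ℤ[X]) ^ (m j) *
            ((Polynomial.C : ℤ →+* ℤ[X]).mapMatrix (Cmat α β m)) i j := by
      refine Matrix.ext fun i j => ?_
      simp [Cmat, RingHom.mapMatrix_apply, mul_comm]
    rw [h1, Matrix.det_mul_row, Finset.prod_pow_eq_pow_sum,
      ← RingHom.map_det (Polynomial.C : ℤ →+* ℤ[X]) (Cmat α β m)]
    ring
  calc (∑ m ∈ Fintype.piFinset (fun _ : Fin r => Finset.range D),
        Matrix.det (Matrix.of fun i j : Fin r =>
          Polynomial.C (((α i * β j).choose (m j) : ℕ) : ℤ) * X ^ (m j))).coeff M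
      = ∑ m ∈ Fintype.piFinset (fun _ : Fin r => Finset.range D),
          (Polynomial.C ((Cmat α β m).det) * X ^ (∑ j, m j)).coeff M := by
        rw [Polynomial.finset_sum_coeff]
        exact Finset.sum_congr rfl fun m _ => by rw [hterm m]
    _ = ∑ m ∈ Fintype.piFinset (fun _ : Fin r => Finset.range D),
          if (∑ j, m j) = M then (Cmat α β m).det else 0 := by
        refine Finset.sum_congr rfl fun m _ => ?_
        rw [Polynomial.coeff_C_mul_X_pow]
        simp [eq_comm]
    _ = _ := by
        rw [Finset.sum_filter]
private lemma Qpoly_coeff_lt {r : ℕ} (α β : Fin r → ℕ) (D : ℕ) (hD : ∀ i j, α i * β j < D)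
    (M : ℕ) (hM : M < ∑ j : Fin r, (j : ℕ)) :
    (Matrix.det (Matrix.of fun i j : Fin r => (X + 1 : ℤ[X]) ^ (α i * β j))).coeff M = 0 := by
  rw [Qpoly_coeff α β D hD M]
  refine Finset.sum_eq_zero fun m hm => ?_
  obtain ⟨-, hsum⟩ := Finset.mem_filter.mp hm
  refine Cmat_det_eq_zero α β fun k hkinj hkle => ?_
  have h1 := sum_le_of_injective hkinj
  have h2 : ∑ j, k j ≤ ∑ j, m j := Finset.sum_le_sum fun j _ => hkle j
  omega

private lemma Qpoly_coeff_N {r : ℕ} (α β : Fin r → ℕ) (D : ℕ) (hD : ∀ i j, α i * β j < D)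
    (hrD : r ≤ D) :
    (∏ j : Fin r, ((j : ℕ).factorial : ℤ)) *
      (Matrix.det (Matrix.of fun i j : Fin r => (X + 1 : ℤ[X]) ^ (α i * β j))).coeff
        (∑ j : Fin r, (j : ℕ))
      = (Matrix.vandermonde (fun i => (α i : ℤ))).det
          * (Matrix.vandermonde (fun j => (β j : ℤ))).det := by
  classical
  set N := ∑ j : Fin r, (j : ℕ) with hN
  rw [Qpoly_coeff α β D hD N]
  have hvanish : ∀ m ∈ (Fintype.piFinset fun _ : Fin r => Finset.range D).filter
      (fun m => ∑ j, m j = N), (Cmat α β m).det ≠ 0 → Function.Injective m := by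
    intro m hm hne
    by_contra hninj
    refine hne (Cmat_det_eq_zero α β fun k hkinj hkle => ?_)
    obtain ⟨-, hsum⟩ := Finset.mem_filter.mp hm
    have hkm : k = m := eq_of_le_of_sum hkinj hkle (le_of_eq hsum)
    exact hninj (hkm ▸ hkinj)
  rw [← Finset.sum_filter_of_ne hvanish]
  have hbij : ∑ m ∈ ((Fintype.piFinset fun _ : Fin r => Finset.range D).filter
        (fun m => ∑ j, m j = N)).filter (fun m => Function.Injective m), (Cmat α β m).det
      = ∑ σ : Equiv.Perm (Fin r), (Cmat α β (fun j => (σ j : ℕ))).det := by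
    refine (Finset.sum_bij (fun (σ : Equiv.Perm (Fin r)) _ => fun j => ((σ j : ℕ)))
      ?_ ?_ ?_ ?_).symm
    · intro σ _
      refine Finset.mem_filter.2 ⟨Finset.mem_filter.2 ⟨Fintype.mem_piFinset.2 fun j =>
        Finset.mem_range.2 (lt_of_lt_of_le (σ j).isLt hrD),
        Equiv.sum_comp σ (fun j : Fin r => (j : ℕ))⟩,
        fun x y h => σ.injective (Fin.val_injective h)⟩
    · intro σ1 _ σ2 _ h
      ext x
      exact congrFun h x
    · intro m hm
      obtain ⟨hm1, hminj⟩ := Finset.mem_filter.mp hm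
      obtain ⟨hm2, hmsum⟩ := Finset.mem_filter.mp hm1
      have hlt : ∀ j, m j < r := fun j => lt_of_injective_sum hminj hmsum j
      have hb : Function.Bijective (fun j => (⟨m j, hlt j⟩ : Fin r)) :=
        Finite.injective_iff_bijective.mp
          (fun x y h => hminj (by simpa using congrArg Fin.val h))
      exact ⟨Equiv.ofBijective _ hb, Finset.mem_univ _, rfl⟩
    · intro σ _
      rfl
  rw [hbij, Finset.mul_sum]
  have hterm : ∀ σ : Equiv.Perm (Fin r),
      (∏ j : Fin r, ((j : ℕ).factorial : ℤ)) * (Cmat α β (fun j => (σ j : ℕ))).det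
        = (Matrix.vandermonde (fun i => (α i : ℤ))).det *
            ((Equiv.Perm.sign σ : ℤ) * ∏ j, (β j : ℤ) ^ (σ j : ℕ)) := by
    intro σ
    rw [Cmat_det_perm α β σ]
    ring
  rw [Finset.sum_congr rfl fun σ _ => hterm σ, ← Finset.mul_sum]
  congr 1
  have hMβ : (Matrix.vandermonde fun j => (β j : ℤ))
      = (Matrix.of fun i j : Fin r => (β j : ℤ) ^ (i : ℕ)).transpose := by
    ext i j
    simp [Matrix.vandermonde]
  rw [hMβ, Matrix.det_transpose, Matrix.det_apply]
  refine Finset.sum_congr rfl fun σ _ => ?_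
  rw [Units.smul_def]
  simp
theorem stmt_6 (p : ℕ) (hp : p.Prime) (r : ℕ) (a b : Fin r → ZMod p)
    (ha : Function.Injective a) (hb : Function.Injective b) :
    Matrix.det (Matrix.of fun i j : Fin r =>
      Complex.exp (-2 * Real.pi * Complex.I / p) ^ (a i * b j).val) ≠ 0 := by
  haveI : Fact p.Prime := ⟨hp⟩
  intro hdet
  set ω : ℂ := Complex.exp (-2 * Real.pi * Complex.I / p) with hω
  have hp0 : (p : ℕ) ≠ 0 := hp.pos.ne'
  have hprim : IsPrimitiveRoot ω p := by
    have h1 := Complex.isPrimitiveRoot_exp p hp0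
    have h2 : ω = (Complex.exp (2 * Real.pi * Complex.I / p))⁻¹ := by
      rw [← Complex.exp_neg, hω]
      congr 1
      ring
    rw [h2]
    exact h1.inv
  set α : Fin r → ℕ := fun i => (a i).val with hα
  set β : Fin r → ℕ := fun j => (b j).val with hβ
  set N : ℕ := ∑ j : Fin r, (j : ℕ) with hN
  set P : ℤ[X] := Matrix.det (Matrix.of fun i j : Fin r => (X : ℤ[X]) ^ (α i * β j)) with hP
  -- Step 1 : evaluation of P at ω is the given determinant
  have hpowmod : ∀ e : ℕ, ω ^ e = ω ^ (e % p) := by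
    intro e
    conv_lhs => rw [← Nat.div_add_mod e p]
    rw [pow_add, pow_mul, hprim.pow_eq_one, one_pow, one_mul]
  have heval : Polynomial.eval₂RingHom (Int.castRingHom ℂ) ω P = 0 := by
    rw [hP, RingHom.map_det]
    have hmm : (Polynomial.eval₂RingHom (Int.castRingHom ℂ) ω).mapMatrix
        (Matrix.of fun i j : Fin r => (X : ℤ[X]) ^ (α i * β j))
        = Matrix.of fun i j : Fin r => ω ^ (a i * b j).val := by
      refine Matrix.ext fun i j => ?_
      simp only [RingHom.mapMatrix_apply, Matrix.map_apply, Matrix.of_apply,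
        Polynomial.coe_eval₂RingHom, Polynomial.eval₂_X_pow]
      rw [hpowmod (α i * β j), ZMod.val_mul]
    rw [hmm]
    exact hdet
  -- Step 2 : cyclotomic divides P over ℚ
  have hPq : Polynomial.aeval ω (P.map (Int.castRingHom ℚ)) = 0 := by
    rw [Polynomial.aeval_def, Polynomial.eval₂_map]
    have hsub : (algebraMap ℚ ℂ).comp (Int.castRingHom ℚ) = Int.castRingHom ℂ :=
      Subsingleton.elim _ _
    rw [hsub]
    exact heval
  have hcyclo_dvd : Polynomial.cyclotomic p ℚ ∣ P.map (Int.castRingHom ℚ) := by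
    rw [Polynomial.cyclotomic_eq_minpoly_rat hprim hp.pos]
    exact minpoly.dvd ℚ ω hPq
  -- the comp with X+1
  have hQP : P.comp (X + 1) = Matrix.det
      (Matrix.of fun i j : Fin r => (X + 1 : ℤ[X]) ^ (α i * β j)) := by
    have hc : P.comp (X + 1) = Polynomial.eval₂RingHom Polynomial.C (X + 1 : ℤ[X]) P := rfl
    rw [hc, hP, RingHom.map_det]
    congr 1
    refine Matrix.ext fun i j => ?_
    simp [RingHom.mapMatrix_apply]
  set D : ℕ := (∑ i, ∑ j, α i * β j) + r + 1 with hD'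
  have hD : ∀ i j : Fin r, α i * β j < D := by
    intro i j
    have h1 : α i * β j ≤ ∑ j', α i * β j' :=
      Finset.single_le_sum (f := fun j' => α i * β j') (fun j' _ => Nat.zero_le _)
        (Finset.mem_univ j)
    have h2 : (∑ j', α i * β j') ≤ ∑ i', ∑ j', α i' * β j' :=
      Finset.single_le_sum (f := fun i' => ∑ j', α i' * β j')
        (fun i' _ => Nat.zero_le _) (Finset.mem_univ i)
    omega
  have hrD : r ≤ D := by omega
  -- Step 3 : (X-1)^N divides P over ℤ
  have hXN : (X : ℤ[X]) ^ N ∣ P.comp (X + 1) := by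
    rw [Polynomial.X_pow_dvd_iff]
    intro d hd
    rw [hQP]
    exact Qpoly_coeff_lt α β D hD d hd
  have h3 : ((X : ℤ[X]) - 1) ^ N ∣ P := by
    obtain ⟨u, hu⟩ := hXN
    refine ⟨u.comp (X - 1), ?_⟩
    have hPP : P = (P.comp (X + 1)).comp (X - 1) := by
      rw [Polynomial.comp_assoc]
      simp
    rw [hPP, hu, Polynomial.mul_comp, Polynomial.pow_comp, Polynomial.X_comp]
  -- Step 4 : product divides over ℚ then over ℤ
  have hmapdvd : ((X : ℚ[X]) - 1) ^ N ∣ P.map (Int.castRingHom ℚ) := by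
    have := map_dvd (Polynomial.mapRingHom (Int.castRingHom ℚ)) h3
    simpa using this
  have hcop : IsCoprime (((X : ℚ[X]) - 1) ^ N) (Polynomial.cyclotomic p ℚ) := by
    refine IsCoprime.pow_left ?_
    have hprime : Prime ((X : ℚ[X]) - 1) := by
      simpa using Polynomial.prime_X_sub_C (1 : ℚ)
    rw [hprime.coprime_iff_not_dvd]
    intro hdvd
    have hroot : Polynomial.IsRoot (Polynomial.cyclotomic p ℚ) 1 := by
      rw [← Polynomial.dvd_iff_isRoot]
      simpa using hdvd
    have := Polynomial.eval_one_cyclotomic_prime (R := ℚ) (p := p)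
    rw [Polynomial.IsRoot] at hroot
    rw [hroot] at this
    exact hp.ne_zero (by exact_mod_cast this.symm)
  have hmulQ : (((X : ℚ[X]) - 1) ^ N * Polynomial.cyclotomic p ℚ) ∣
      P.map (Int.castRingHom ℚ) := hcop.mul_dvd hmapdvd hcyclo_dvd
  have hmonic : (((X : ℤ[X]) - 1) ^ N * Polynomial.cyclotomic p ℤ).Monic := by
    refine Polynomial.Monic.mul ?_ (Polynomial.cyclotomic.monic p ℤ)
    have hx : ((X : ℤ[X]) - 1).Monic := by simpa using Polynomial.monic_X_sub_C (1 : ℤ)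
    exact hx.pow N
  have h5 : (((X : ℤ[X]) - 1) ^ N * Polynomial.cyclotomic p ℤ) ∣ P := by
    rw [← Polynomial.map_dvd_map (Int.castRingHom ℚ) Int.cast_injective hmonic]
    simpa [Polynomial.map_mul, Polynomial.map_pow, Polynomial.map_sub, Polynomial.map_X,
      Polynomial.map_one, Polynomial.map_cyclotomic_int] using hmulQ
  -- Step 5 : pass to ZMod p
  have h6 : (((X : (ZMod p)[X]) - 1) ^ N * Polynomial.cyclotomic p (ZMod p)) ∣
      P.map (Int.castRingHom (ZMod p)) := by
    have := map_dvd (Polynomial.mapRingHom (Int.castRingHom (ZMod p))) h5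
    simpa [Polynomial.map_mul, Polynomial.map_pow, Polynomial.map_sub, Polynomial.map_X,
      Polynomial.map_one, Polynomial.map_cyclotomic] using this
  have hcycF : Polynomial.cyclotomic p (ZMod p) = ((X : (ZMod p)[X]) - 1) ^ (p - 1) := by
    have h1 : Polynomial.cyclotomic p (ZMod p) * ((X : (ZMod p)[X]) - 1) = X ^ p - 1 :=
      Polynomial.cyclotomic_prime_mul_X_sub_one (ZMod p) p
    have h2 : ((X : (ZMod p)[X]) - 1) ^ p = X ^ p - 1 := by
      have h2' := sub_pow_char (p := p) (X : (ZMod p)[X]) (1 : (ZMod p)[X])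
      simpa using h2'
    have h3 : ((X : (ZMod p)[X]) - 1) ≠ 0 := by
      simpa using Polynomial.X_sub_C_ne_zero (1 : ZMod p)
    apply mul_right_cancel₀ h3
    rw [h1, ← pow_succ, ← h2]
    congr 1
    have := hp.two_le
    omega
  have h7 : (X : (ZMod p)[X]) ^ (N + (p - 1)) ∣
      (P.map (Int.castRingHom (ZMod p))).comp (X + 1) := by
    obtain ⟨u, hu⟩ := h6
    refine ⟨u.comp (X + 1), ?_⟩
    rw [hu, hcycF, ← pow_add, Polynomial.mul_comp, Polynomial.pow_comp, Polynomial.sub_comp,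
      Polynomial.X_comp, Polynomial.one_comp]
    simp
  have h8 : ((P.map (Int.castRingHom (ZMod p))).comp (X + 1)).coeff N = 0 := by
    refine Polynomial.X_pow_dvd_iff.mp h7 N ?_
    have := hp.two_le
    omega
  have hcompmap : (P.map (Int.castRingHom (ZMod p))).comp (X + 1)
      = (P.comp (X + 1)).map (Int.castRingHom (ZMod p)) := by
    rw [Polynomial.map_comp]
    simp
  have hcast : (((P.comp (X + 1)).coeff N : ℤ) : ZMod p) = 0 := by
    have h8' := h8
    rw [hcompmap, Polynomial.coeff_map] at h8'
    exact h8'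
  -- Step 6 : the key coefficient identity
  have hfinal := Qpoly_coeff_N α β D hD hrD
  rw [← hQP] at hfinal
  have hfinZ := congrArg (fun z : ℤ => (z : ZMod p)) hfinal
  simp only [Int.cast_mul] at hfinZ
  rw [hcast, mul_zero] at hfinZ
  -- compute the two casted Vandermonde determinants
  have hcastV : ∀ (c : Fin r → ZMod p),
      (((Matrix.vandermonde fun i => ((c i).val : ℤ)).det : ℤ) : ZMod p)
        = (Matrix.vandermonde c).det := by
    intro c
    rw [show ((((Matrix.vandermonde fun i => ((c i).val : ℤ)).det : ℤ) : ZMod p))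
        = (Int.castRingHom (ZMod p)) (Matrix.vandermonde fun i => ((c i).val : ℤ)).det from rfl,
      RingHom.map_det]
    congr 1
    refine Matrix.ext fun i j => ?_
    simp only [RingHom.mapMatrix_apply, Matrix.map_apply, Matrix.vandermonde,
      Matrix.of_apply, map_pow]
    congr 1
    rw [map_natCast (Int.castRingHom (ZMod p)) (c i).val, ZMod.natCast_val, ZMod.cast_id]
  rw [hcastV a, hcastV b] at hfinZ
  have hVa : (Matrix.vandermonde a).det ≠ 0 := by
    rw [Ne, Matrix.det_vandermonde_eq_zero_iff]
    rintro ⟨i, j, hij, hne⟩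
    exact hne (ha hij)
  have hVb : (Matrix.vandermonde b).det ≠ 0 := by
    rw [Ne, Matrix.det_vandermonde_eq_zero_iff]
    rintro ⟨i, j, hij, hne⟩
    exact hne (hb hij)
  exact mul_ne_zero hVa hVb hfinZ.symm
end

section
/- Let n be a square-free positive integer, p a prime dividing n, and ω a primitive n-th root of unity. Then Φ_n(ω^p) = p·u for some unit u in the ring ℤ[ω^p]. -/
open Polynomial

theorem stmt_10 (n : ℕ) (hn : Squarefree n) (p : ℕ) (hp : p.Prime) (hpn : p ∣ n)
    (ω : ℂ) (hω : IsPrimitiveRoot ω n) :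
    ∃ u : (Algebra.adjoin ℤ ({ω ^ p} : Set ℂ))ˣ,
      (Polynomial.cyclotomic n ℂ).eval (ω ^ p) = (p : ℂ) * ((u : Algebra.adjoin ℤ ({ω ^ p} : Set ℂ)) : ℂ) := by
  obtain ⟨m, hm⟩ := hpn
  have hn0 : n ≠ 0 := hn.ne_zero
  have hm0 : 0 < m := Nat.pos_of_ne_zero (by rintro rfl; simp at hm; exact hn0 hm)
  have hpm : ¬ p ∣ m := fun h =>
    hp.not_isUnit (hn p (by rw [hm]; exact mul_dvd_mul_left p h))
  have hnm : n = m * p := by rw [hm, Nat.mul_comm]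
  have hζ : IsPrimitiveRoot (ω ^ p) m := hω.pow (Nat.pos_of_ne_zero hn0) hm
  have hzmem : ω ^ p ∈ Algebra.adjoin ℤ ({ω ^ p} : Set ℂ) :=
    Algebra.self_mem_adjoin_singleton ℤ _
  set z : Algebra.adjoin ℤ ({ω ^ p} : Set ℂ) := ⟨ω ^ p, hzmem⟩ with hz
  have hcoe : ∀ P : ℤ[X],
      ((Polynomial.aeval z P : Algebra.adjoin ℤ ({ω ^ p} : Set ℂ)) : ℂ)
        = Polynomial.aeval (ω ^ p) P := fun P =>
    (Polynomial.aeval_algebraMap_apply ℂ z P).symm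
  -- Fact A polynomial identity
  obtain ⟨g, hg⟩ : ∃ g : ℤ[X], cyclotomic (m * p) ℤ = cyclotomic m ℤ ^ (p - 1) + C (p : ℤ) * g := by
    haveI : Fact p.Prime := ⟨hp⟩
    have h := cyclotomic_mul_prime_eq_pow_of_not_dvd (ZMod p) (p := p) (n := m) hpm
    have hd : C (p : ℤ) ∣ (cyclotomic (m * p) ℤ - cyclotomic m ℤ ^ (p - 1)) := by
      rw [C_dvd_iff_dvd_coeff]
      intro i
      have h0 : ((cyclotomic (m * p) ℤ - cyclotomic m ℤ ^ (p - 1)).map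
          (Int.castRingHom (ZMod p))) = 0 := by
        rw [Polynomial.map_sub, Polynomial.map_pow, map_cyclotomic_int, map_cyclotomic_int, h,
          sub_self]
      have hc := congrArg (fun q => Polynomial.coeff q i) h0
      simp only [Polynomial.coeff_map, Polynomial.coeff_zero] at hc
      exact_mod_cast (ZMod.intCast_zmod_eq_zero_iff_dvd _ p).1 hc
    obtain ⟨g, hg⟩ := hd
    exact ⟨g, by linear_combination hg⟩
  -- Fact B polynomial identity
  obtain ⟨T, hT⟩ : ∃ T : ℤ[X], cyclotomic (m * p) ℤ * T = ∑ i ∈ Finset.range p, (X ^ m) ^ i := by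
    have hn' : 0 < m * p := Nat.mul_pos hm0 hp.pos
    have hsub : insert (m * p) m.divisors ⊆ (m * p).divisors := by
      intro d hd
      rcases Finset.mem_insert.1 hd with rfl | hd
      · exact Nat.mem_divisors.2 ⟨dvd_rfl, hn'.ne'⟩
      · exact Nat.mem_divisors.2 ⟨(Nat.mem_divisors.1 hd).1.trans ⟨p, rfl⟩, hn'.ne'⟩
    have hdvd : cyclotomic (m * p) ℤ * (X ^ m - 1) ∣ X ^ (m * p) - 1 := by
      rw [← prod_cyclotomic_eq_X_pow_sub_one hn', ← prod_cyclotomic_eq_X_pow_sub_one hm0,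
        ← Finset.prod_insert (f := fun i => cyclotomic i ℤ)
          (by simp [Nat.mem_divisors]; intro h; have := Nat.le_of_dvd hm0 h; nlinarith [hp.one_lt])]
      exact Finset.prod_dvd_prod_of_subset _ _ _ hsub
    obtain ⟨T, hT⟩ := hdvd
    refine ⟨T, mul_left_cancel₀ (X_pow_sub_C_ne_zero hm0 (1 : ℤ)) ?_⟩
    have hgs : (X ^ m - 1 : ℤ[X]) * ∑ i ∈ Finset.range p, (X ^ m) ^ i = X ^ (m * p) - 1 := by
      have h2 := geom_sum_mul (X ^ m : ℤ[X]) p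
      rw [← pow_mul] at h2
      linear_combination h2
    rw [map_one] at *
    linear_combination -hT - hgs
  -- evaluations
  have hcycm : Polynomial.aeval z (cyclotomic m ℤ) = 0 := by
    have hval : ((Polynomial.aeval z (cyclotomic m ℤ) : Algebra.adjoin ℤ ({ω ^ p} : Set ℂ)) : ℂ)
        = 0 := by
      rw [hcoe, Polynomial.aeval_def, Polynomial.eval₂_eq_eval_map, map_cyclotomic]
      exact hζ.isRoot_cyclotomic hm0
    exact Subtype.coe_injective (by simpa using hval)
  have hzm : z ^ m = 1 := by
    apply Subtype.coe_injective
    push_cast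
    exact hζ.pow_eq_one
  have hA : Polynomial.aeval z (cyclotomic (m * p) ℤ)
      = (p : Algebra.adjoin ℤ ({ω ^ p} : Set ℂ)) * Polynomial.aeval z g := by
    have h1 := congrArg (Polynomial.aeval z) hg
    simp only [map_add, map_mul, map_pow, aeval_C, hcycm] at h1
    rw [h1, zero_pow (Nat.sub_ne_zero_of_lt hp.one_lt), zero_add]
    push_cast
    ring
  have hB : Polynomial.aeval z (cyclotomic (m * p) ℤ) * Polynomial.aeval z T
      = (p : Algebra.adjoin ℤ ({ω ^ p} : Set ℂ)) := by
    have h1 := congrArg (Polynomial.aeval z) hT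
    simp only [map_mul, map_sum, map_pow, aeval_X, hzm, one_pow, Finset.sum_const,
      Finset.card_range, nsmul_eq_mul, mul_one] at h1
    exact h1
  have hp0 : (p : Algebra.adjoin ℤ ({ω ^ p} : Set ℂ)) ≠ 0 := by
    intro h
    have h2 := congrArg (Subtype.val) h
    push_cast at h2
    exact_mod_cast hp.ne_zero (by exact_mod_cast h2)
  have hxt : Polynomial.aeval z g * Polynomial.aeval z T = 1 := by
    refine mul_left_cancel₀ hp0 ?_
    rw [mul_one]
    linear_combination hB - Polynomial.aeval z T * hA
  refine ⟨⟨Polynomial.aeval z g, Polynomial.aeval z T, hxt, by rw [mul_comm]; exact hxt⟩, ?_⟩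
  have hfin : (cyclotomic n ℂ).eval (ω ^ p)
      = ((Polynomial.aeval z (cyclotomic (m * p) ℤ) :
          Algebra.adjoin ℤ ({ω ^ p} : Set ℂ)) : ℂ) := by
    rw [hcoe, Polynomial.aeval_def, Polynomial.eval₂_eq_eval_map, map_cyclotomic, hnm]
  rw [hfin, hA]
  push_cast
  ring
end

section
/- Let q be a prime not dividing M, let ζ be a primitive M-th root of unity in an extension field of 𝔽_q, let A ⊆ ℤ/Mℤ be an arithmetic progression with common difference d and |A| = n, and let B = {b_1,...,b_n} ⊆ ℤ/Mℤ be such that d(b − b') ≢ 0 mod M for all distinct b, b' ∈ B. Then det(ζ^{ab})_{a∈A, b∈B} ≠ 0. -/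
theorem stmt_11 (M q : ℕ) (hq : q.Prime) (hqM : ¬ q ∣ M) (hM : 0 < M)
    (F : Type*) [Field F] (hF : CharP F q) (ζ : F) (hζ : IsPrimitiveRoot ζ M)
    (n : ℕ) (a₀ d : ZMod M) (b : Fin n → ZMod M)
    (hb : ∀ i j : Fin n, i ≠ j → d * (b i - b j) ≠ 0) :
    Matrix.det (Matrix.of fun i j : Fin n =>
      ζ ^ ((a₀ + (i : ℕ) * d) * b j).val) ≠ 0 := by
  haveI : NeZero M := ⟨hM.ne'⟩
  have hmod : ∀ a : ℕ, ζ ^ a = ζ ^ (a % M) := by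
    intro a
    conv_lhs => rw [← Nat.div_add_mod a M]
    rw [pow_add, pow_mul, hζ.pow_eq_one, one_pow, one_mul]
  have hpp : ∀ a c : ℕ, ζ ^ a = ζ ^ c ↔ a ≡ c [MOD M] := by
    intro a c
    constructor
    · intro h
      exact hζ.pow_inj (Nat.mod_lt a hM) (Nat.mod_lt c hM)
        (by rw [← hmod, ← hmod]; exact h)
    · intro h
      rw [hmod a, hmod c]
      exact congrArg (ζ ^ ·) h
  have heq : ∀ (k : ℕ) (u : ZMod M), (k : ZMod M) = u → ζ ^ k = ζ ^ u.val := by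
    intro k u h
    rw [hpp, ← ZMod.natCast_eq_natCast_iff]
    simpa [ZMod.natCast_val, ZMod.cast_id] using h
  set x : Fin n → F := fun j => ζ ^ ((d * b j).val) with hxdef
  have hζ0 : ζ ≠ 0 := by
    intro h
    have := hζ.pow_eq_one
    rw [h, zero_pow hM.ne'] at this
    exact zero_ne_one this
  have hent : ∀ i j : Fin n,
      ζ ^ (((a₀ + (i : ℕ) * d) * b j).val) = ζ ^ ((a₀ * b j).val) * x j ^ (i : ℕ) := by
    intro i j
    have h1 : x j ^ (i : ℕ) = ζ ^ ((((i : ℕ) : ZMod M) * (d * b j)).val) := by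
      rw [hxdef, ← pow_mul]
      apply heq
      push_cast [ZMod.natCast_val, ZMod.cast_id]
      ring
    rw [h1, ← pow_add]
    symm
    apply heq
    push_cast [ZMod.natCast_val, ZMod.cast_id]
    ring
  have hmat : (Matrix.of fun i j : Fin n => ζ ^ ((a₀ + (i : ℕ) * d) * b j).val)
      = Matrix.of fun i j : Fin n =>
        (fun j : Fin n => ζ ^ ((a₀ * b j).val)) j * (Matrix.vandermonde x).transpose i j := by
    ext i j
    simpa [Matrix.vandermonde] using hent i j
  rw [hmat, Matrix.det_mul_row, Matrix.det_transpose]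
  apply mul_ne_zero
  · exact Finset.prod_ne_zero_iff.mpr fun j _ => pow_ne_zero _ hζ0
  · rw [Matrix.det_vandermonde_ne_zero_iff]
    intro i j h
    by_contra hij
    apply hb i j hij
    have h1 : (d * b i).val ≡ (d * b j).val [MOD M] := (hpp _ _).mp h
    have h2 : d * b i = d * b j := by
      have := (ZMod.natCast_eq_natCast_iff _ _ _).mpr h1
      simpa [ZMod.natCast_val, ZMod.cast_id] using this
    rw [mul_sub, h2, sub_self]
end

section
/- Let B be a square matrix with n×n block structure, where the (i,j) block is a_{ij}·B_{ij} with a_{ij} ∈ ℂ and B_{ij} ∈ ℂ^{M_i × M_j}, satisfying M_1 ≥ M_2 ≥ ⋯ ≥ M_n and such that B_{ij} equals the submatrix of B_{i1} formed by its first M_j columns. Then det B = ∏_{k=1}^n (det A_k)^{M_k − M_{k+1}} · ∏_{i=1}^n det B_{ii}, where M_{n+1} = 0 and A_k = (a_{ij})_{1≤i,j≤k}. -/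
open Matrix Finset

theorem det_updateCol_last_single {F : Type*} [CommRing F] (l : ℕ)
    (A : Matrix (Fin (l+1)) (Fin (l+1)) F) :
    (A.updateCol (Fin.last l) (Pi.single (Fin.last l) 1)).det
      = (A.submatrix Fin.castSucc Fin.castSucc).det := by
  rw [Matrix.det_succ_column _ (Fin.last l)]
  rw [Finset.sum_eq_single (Fin.last l)]
  · simp only [Matrix.updateCol_self, Pi.single_eq_same, Fin.succAbove_last]
    rw [show ((-1 : F) ^ ((Fin.last l : ℕ) + (Fin.last l : ℕ)) = 1) by
      simp [(neg_one_pow_eq_one_iff_even (R := F)), Even.add_self]]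
    rw [one_mul, one_mul]
    congr 1
    ext i j
    simp [Matrix.updateCol_apply, (Fin.castSucc_lt_last j).ne]
  · intro i _ hi
    simp [Matrix.updateCol_self, Pi.single_eq_of_ne hi]
  · simp

namespace Stmt17
variable {F : Type*} [Field F]

def Amat (n : ℕ) (a : Fin n → Fin n → F) (k : Fin n) :
    Matrix (Fin (k.val+1)) (Fin (k.val+1)) F :=
  Matrix.of fun i j => a (Fin.castLE k.isLt i) (Fin.castLE k.isLt j)

noncomputable def E (n : ℕ) (a : Fin n → Fin n → F) (t : ℕ) : F :=
  if h : t ≤ n then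
    Matrix.det (Matrix.of fun i j : Fin t =>
      a ⟨i, lt_of_lt_of_le i.isLt h⟩ ⟨j, lt_of_lt_of_le j.isLt h⟩)
  else 1

noncomputable def uu (n : ℕ) (a : Fin n → Fin n → F) (j l : Fin n) : F :=
  if h : j.val < l.val + 1 then
    Matrix.cramer (Amat n a l) (Pi.single (Fin.last l.val) 1) ⟨j.val, h⟩
  else 0

lemma det_Amat (n : ℕ) (a : Fin n → Fin n → F) (k : Fin n) :
    Matrix.det (Amat n a k) = E n a (k.val + 1) := by
  rw [E, dif_pos (show k.val + 1 ≤ n from k.isLt)]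
  rfl

lemma uu_diag (n : ℕ) (a : Fin n → Fin n → F) (l : Fin n) :
    uu n a l l = E n a l.val := by
  rw [uu, dif_pos (Nat.lt_succ_self _)]
  have h1 : (⟨l.val, Nat.lt_succ_self _⟩ : Fin (l.val+1)) = Fin.last l.val := rfl
  rw [h1, Matrix.cramer_apply, det_updateCol_last_single, E,
    dif_pos (le_of_lt l.isLt)]
  rfl

lemma sum_uu (n : ℕ) (a : Fin n → Fin n → F) (i l : Fin n) (h : i.val ≤ l.val) :
    (∑ j : Fin n, a i j * uu n a j l)
      = if i = l then Matrix.det (Amat n a l) else 0 := by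
  have hsub : (univ : Finset (Fin (l.val+1))).map (Fin.castLEEmb l.isLt) ⊆ univ :=
    subset_univ _
  rw [← Finset.sum_subset hsub (by
    intro x _ hx
    have hxl : ¬ x.val < l.val + 1 := by
      simp only [Finset.mem_map, Finset.mem_univ, true_and, Fin.castLEEmb_apply] at hx
      intro hc
      exact hx ⟨⟨x.val, hc⟩, by ext; rfl⟩
    rw [uu, dif_neg hxl, mul_zero])]
  rw [Finset.sum_map]
  have key : ∀ j' : Fin (l.val+1),
      a i (Fin.castLEEmb l.isLt j') * uu n a (Fin.castLEEmb l.isLt j') l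
        = Amat n a l ⟨i.val, Nat.lt_succ_of_le h⟩ j'
          * Matrix.cramer (Amat n a l) (Pi.single (Fin.last l.val) 1) j' := by
    intro j'
    rw [uu, dif_pos (show ((Fin.castLEEmb l.isLt j' : Fin n) : ℕ) < l.val + 1 from j'.isLt)]
    rfl
  rw [Finset.sum_congr rfl fun j' _ => key j']
  have h2 := congrFun (Matrix.mulVec_cramer (Amat n a l) (Pi.single (Fin.last l.val) 1))
    ⟨i.val, Nat.lt_succ_of_le h⟩
  rw [Matrix.mulVec, dotProduct] at h2
  rw [h2, Pi.smul_apply, Pi.single_apply, smul_eq_mul]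
  have hiff : (⟨i.val, Nat.lt_succ_of_le h⟩ : Fin (l.val+1)) = Fin.last l.val ↔ i = l := by
    rw [Fin.ext_iff, Fin.ext_iff]; exact Iff.rfl
  by_cases hil : i = l
  · rw [if_pos (hiff.2 hil), if_pos hil, mul_one]
  · rw [if_neg (fun hc => hil (hiff.1 hc)), if_neg hil, mul_zero]


def blkEquiv (n : ℕ) (M : Fin n → ℕ) (k : Fin n) :
    Fin (M k) ≃ {p : (i : Fin n) × Fin (M i) // p.1 = k} where
  toFun t := ⟨⟨k, t⟩, rfl⟩
  invFun p := Fin.cast (congrArg M p.2) p.1.2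
  left_inv t := rfl
  right_inv p := by rcases p with ⟨⟨i, t⟩, h⟩; subst h; rfl

lemma det_toSquareBlock_fst {n : ℕ} {M : Fin n → ℕ}
    (X : Matrix ((i : Fin n) × Fin (M i)) ((i : Fin n) × Fin (M i)) F) (k : Fin n) :
    (X.toSquareBlock (fun p => p.1) k).det
      = (Matrix.of fun s t : Fin (M k) => X ⟨k, s⟩ ⟨k, t⟩).det := by
  rw [← Matrix.det_submatrix_equiv_self (blkEquiv n M k)
    (X.toSquareBlock (fun p => p.1) k)]
  rfl

def blkEquiv' (n : ℕ) (M : Fin n → ℕ) (k : Fin n) :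
    Fin (M k) ≃ {p : (i : Fin n) × Fin (M i) //
      (OrderDual.toDual p.1 : (Fin n)ᵒᵈ) = OrderDual.toDual k} where
  toFun t := ⟨⟨k, t⟩, rfl⟩
  invFun p := Fin.cast (congrArg M (show p.1.1 = k from p.2)) p.1.2
  left_inv t := rfl
  right_inv p := by rcases p with ⟨⟨i, t⟩, h⟩; cases (show i = k from h); rfl

lemma det_toSquareBlock_fst' {n : ℕ} {M : Fin n → ℕ}
    (X : Matrix ((i : Fin n) × Fin (M i)) ((i : Fin n) × Fin (M i)) F) (k : Fin n) :
    (X.toSquareBlock (fun p => (OrderDual.toDual p.1 : (Fin n)ᵒᵈ))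
        (OrderDual.toDual k)).det
      = (Matrix.of fun s t : Fin (M k) => X ⟨k, s⟩ ⟨k, t⟩).det := by
  rw [← Matrix.det_submatrix_equiv_self (blkEquiv' n M k)]
  rfl



noncomputable def Umat (n : ℕ) (M : Fin n → ℕ) (a : Fin n → Fin n → F) :
    Matrix ((i : Fin n) × Fin (M i)) ((i : Fin n) × Fin (M i)) F :=
  Matrix.of fun p q => uu n a p.1 q.1 * (if (p.2 : ℕ) = (q.2 : ℕ) then 1 else 0)

lemma det_Umat (n : ℕ) (M : Fin n → ℕ) (a : Fin n → Fin n → F) :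
    (Umat n M a).det = ∏ l : Fin n, uu n a l l ^ M l := by
  have htri : (Umat n M a).BlockTriangular (fun p => p.1) := by
    intro p q h
    have hlt : q.1.val < p.1.val := h
    have hnot : ¬ p.1.val < q.1.val + 1 := Nat.not_lt.mpr hlt
    simp only [Umat, Matrix.of_apply, uu, dif_neg hnot, zero_mul]
  rw [htri.det_fintype]
  refine Finset.prod_congr rfl fun k _ => ?_
  rw [det_toSquareBlock_fst]
  have : (Matrix.of fun s t : Fin (M k) => Umat n M a ⟨k, s⟩ ⟨k, t⟩)
      = uu n a k k • (1 : Matrix (Fin (M k)) (Fin (M k)) F) := by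
    ext s t
    simp only [Matrix.of_apply, Umat, Matrix.smul_apply, Matrix.one_apply, smul_eq_mul]
    by_cases hst : s = t
    · subst hst; simp
    · rw [if_neg (fun hc => hst (Fin.ext hc)), if_neg hst]
  rw [this, Matrix.det_smul, Matrix.det_one, mul_one, Fintype.card_fin]

lemma mul_Umat (n : ℕ) (hn : 0 < n) (M : Fin n → ℕ) (hM : Antitone M)
    (hle : ∀ j : Fin n, M j ≤ M ⟨0, hn⟩)
    (a : Fin n → Fin n → F)
    (C : (i : Fin n) → Matrix (Fin (M i)) (Fin (M ⟨0, hn⟩)) F)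
    (B : Matrix ((i : Fin n) × Fin (M i)) ((i : Fin n) × Fin (M i)) F)
    (hB : ∀ (i j : Fin n) (s : Fin (M i)) (t : Fin (M j)),
      B ⟨i, s⟩ ⟨j, t⟩ = a i j * C i s (Fin.castLE (hle j) t))
    (i l : Fin n) (s : Fin (M i)) (t : Fin (M l)) :
    (B * Umat n M a) ⟨i, s⟩ ⟨l, t⟩
      = (∑ j : Fin n, a i j * uu n a j l) * C i s (Fin.castLE (hle l) t) := by
  rw [Matrix.mul_apply, Finset.sum_mul, ← Finset.univ_sigma_univ, Finset.sum_sigma]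
  refine Finset.sum_congr rfl fun j _ => ?_
  by_cases ht : (t : ℕ) < M j
  · rw [Finset.sum_eq_single (⟨(t : ℕ), ht⟩ : Fin (M j))]
    · rw [hB]
      simp only [Umat, Matrix.of_apply, if_pos rfl, if_true, mul_one]
      have hcast : Fin.castLE (hle j) (⟨(t : ℕ), ht⟩ : Fin (M j)) = Fin.castLE (hle l) t :=
        Fin.ext rfl
      rw [hcast]; ring
    · intro r _ hr
      have hne : ¬ (r : ℕ) = (t : ℕ) := fun hc => hr (Fin.ext hc)
      simp only [Umat, Matrix.of_apply, if_neg hne, mul_zero]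
    · intro hmem; exact absurd (Finset.mem_univ _) hmem
  · have hnot : ¬ (j.val < l.val + 1) := by
      intro hc
      exact ht (lt_of_lt_of_le t.isLt (hM (Fin.le_def.mpr (Nat.lt_succ_iff.mp hc))))
    rw [uu, dif_neg hnot, mul_zero, zero_mul]
    refine Finset.sum_eq_zero fun r _ => ?_
    have h2 : M j ≤ (t : ℕ) := Nat.not_lt.mp ht
    have h1 : (r : ℕ) < M j := r.isLt
    have hne : ¬ (r : ℕ) = (t : ℕ) := by omega
    simp only [Umat, Matrix.of_apply, if_neg hne, mul_zero]

def mfun (n : ℕ) (M : Fin n → ℕ) (t : ℕ) : ℕ := if h : t < n then M ⟨t, h⟩ else 0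

lemma mfun_fin {n : ℕ} (M : Fin n → ℕ) (k : Fin n) : mfun n M k.val = M k := by
  rw [mfun, dif_pos k.isLt]

lemma tele (f : ℕ → F) (m : ℕ → ℕ) (n : ℕ) (hn : 0 < n) (hf0 : f 0 = 1) (hmn : m n = 0)
    (hm : ∀ t, m (t + 1) ≤ m t) :
    (∏ t ∈ Finset.range n, f (t + 1) ^ (m t - m (t + 1)))
        * (∏ t ∈ Finset.range n, f t ^ m t)
      = ∏ t ∈ Finset.range n, f (t + 1) ^ m t := by
  have h2 : (∏ t ∈ Finset.range n, f t ^ m t)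
      = ∏ t ∈ Finset.range n, f (t + 1) ^ m (t + 1) := by
    obtain ⟨n', rfl⟩ := Nat.exists_eq_succ_of_ne_zero hn.ne'
    rw [Finset.prod_range_succ' (fun t => f t ^ m t) n']
    rw [Finset.prod_range_succ (fun t => f (t + 1) ^ m (t + 1)) n']
    rw [hf0, one_pow, mul_one, hmn, pow_zero, mul_one]
  rw [h2, ← Finset.prod_mul_distrib]
  exact Finset.prod_congr rfl fun t _ => by rw [← pow_add, Nat.sub_add_cancel (hm t)]

theorem key (n : ℕ) (hn : 0 < n) (M : Fin n → ℕ) (hM : Antitone M)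
    (hle : ∀ j : Fin n, M j ≤ M ⟨0, hn⟩)
    (a : Fin n → Fin n → F)
    (C : (i : Fin n) → Matrix (Fin (M i)) (Fin (M ⟨0, hn⟩)) F)
    (B : Matrix ((i : Fin n) × Fin (M i)) ((i : Fin n) × Fin (M i)) F)
    (hB : ∀ (i j : Fin n) (s : Fin (M i)) (t : Fin (M j)),
      B ⟨i, s⟩ ⟨j, t⟩ = a i j * C i s (Fin.castLE (hle j) t))
    (hA : ∀ k : Fin n, (Amat n a k).det ≠ 0) :
    B.det =
      (∏ k : Fin n, (Amat n a k).det ^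
          (M k - if h : k.val + 1 < n then M ⟨k.val + 1, h⟩ else 0)) *
      ∏ i : Fin n,
        Matrix.det (Matrix.of fun s t : Fin (M i) => C i s (Fin.castLE (hle i) t)) := by
  have hBU := mul_Umat n hn M hM hle a C B hB
  have htri : (B * Umat n M a).BlockTriangular
      (fun p => (OrderDual.toDual p.1 : (Fin n)ᵒᵈ)) := by
    intro p q h
    have hlt : p.1 < q.1 := h
    rcases p with ⟨i, s⟩; rcases q with ⟨l, t⟩
    rw [hBU, sum_uu n a i l (le_of_lt hlt), if_neg (ne_of_lt hlt), zero_mul]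
  have hdetBU : (B * Umat n M a).det
      = ∏ k : Fin n, ((Amat n a k).det ^ M k
          * Matrix.det (Matrix.of fun s t : Fin (M k) =>
              C k s (Fin.castLE (hle k) t))) := by
    rw [htri.det_fintype,
      ← Equiv.prod_comp (OrderDual.toDual (α := Fin n))]
    refine Finset.prod_congr rfl fun k _ => ?_
    rw [det_toSquareBlock_fst']
    have heq : (Matrix.of fun s t : Fin (M k) => (B * Umat n M a) ⟨k, s⟩ ⟨k, t⟩)
        = (Amat n a k).det
            • (Matrix.of fun s t : Fin (M k) => C k s (Fin.castLE (hle k) t)) := by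
      ext s t
      rw [Matrix.of_apply, hBU, sum_uu n a k k (le_refl _), if_pos rfl]
      rfl
    rw [heq, Matrix.det_smul, Fintype.card_fin]
  have hdetU : (Umat n M a).det = ∏ l : Fin n, E n a l.val ^ M l := by
    rw [det_Umat]; exact Finset.prod_congr rfl fun l _ => by rw [uu_diag]
  have eq1 : B.det * ∏ l : Fin n, E n a l.val ^ M l
      = ∏ k : Fin n, ((Amat n a k).det ^ M k
          * Matrix.det (Matrix.of fun s t : Fin (M k) =>
              C k s (Fin.castLE (hle k) t))) := by
    rw [← hdetU, ← Matrix.det_mul, hdetBU]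
  have hEne : ∀ t, t ≤ n → E n a t ≠ 0 := by
    intro t ht
    cases t with
    | zero =>
      rw [E, dif_pos (Nat.zero_le n)]
      rw [Matrix.det_isEmpty]
      exact one_ne_zero
    | succ s =>
      have hs : s < n := ht
      have he : E n a (s + 1) = (Amat n a ⟨s, hs⟩).det := (det_Amat n a ⟨s, hs⟩).symm
      rw [he]; exact hA ⟨s, hs⟩
  have hX : (∏ l : Fin n, E n a l.val ^ M l) ≠ 0 :=
    Finset.prod_ne_zero_iff.mpr fun l _ => pow_ne_zero _ (hEne l.val (le_of_lt l.isLt))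
  have hTX : (∏ k : Fin n, (Amat n a k).det ^
          (M k - if h : k.val + 1 < n then M ⟨k.val + 1, h⟩ else 0))
        * (∏ l : Fin n, E n a l.val ^ M l)
      = ∏ k : Fin n, (Amat n a k).det ^ M k := by
    have e1 : (∏ k : Fin n, (Amat n a k).det ^
          (M k - if h : k.val + 1 < n then M ⟨k.val + 1, h⟩ else 0))
        = ∏ t ∈ Finset.range n, E n a (t + 1) ^ (mfun n M t - mfun n M (t + 1)) := by
      rw [← Fin.prod_univ_eq_prod_range
        (fun t => E n a (t + 1) ^ (mfun n M t - mfun n M (t + 1))) n]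
      refine Finset.prod_congr rfl fun k _ => ?_
      rw [det_Amat, ← mfun_fin M k]
      rfl
    have e2 : (∏ l : Fin n, E n a l.val ^ M l)
        = ∏ t ∈ Finset.range n, E n a t ^ mfun n M t := by
      rw [← Fin.prod_univ_eq_prod_range (fun t => E n a t ^ mfun n M t) n]
      exact Finset.prod_congr rfl fun l _ => by rw [mfun_fin M l]
    have e3 : (∏ k : Fin n, (Amat n a k).det ^ M k)
        = ∏ t ∈ Finset.range n, E n a (t + 1) ^ mfun n M t := by
      rw [← Fin.prod_univ_eq_prod_range (fun t => E n a (t + 1) ^ mfun n M t) n]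
      exact Finset.prod_congr rfl fun k _ => by rw [det_Amat, mfun_fin M k]
    rw [e1, e2, e3]
    refine tele (E n a) (mfun n M) n hn ?_ ?_ ?_
    · rw [E, dif_pos (Nat.zero_le n), Matrix.det_isEmpty]
    · rw [mfun, dif_neg (lt_irrefl n)]
    · intro t
      by_cases h1 : t + 1 < n
      · have h0 : t < n := Nat.lt_of_succ_lt h1
        rw [mfun, dif_pos h1, mfun, dif_pos h0]
        exact hM (Fin.mk_le_mk.mpr (Nat.le_succ t))
      · rw [mfun, dif_neg h1]; exact Nat.zero_le _
  refine mul_right_cancel₀ hX ?_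
  rw [eq1, Finset.prod_mul_distrib, ← hTX]
  ring

end Stmt17


open Stmt17 in

/-- Block determinant lemma: the big matrix is indexed by `Σ i : Fin n, Fin (M i)`;
its `(i,j)` block is `a i j • B i j`, where `B i j` consists of the first `M j`
columns of `B i 0` (the blocks are nested, `M` is antitone). -/
theorem stmt_17 (n : ℕ) (hn : 0 < n) (M : Fin n → ℕ) (hM : Antitone M)
    (hle : ∀ j : Fin n, M j ≤ M ⟨0, hn⟩)
    (a : Fin n → Fin n → ℂ)
    (C : (i : Fin n) → Matrix (Fin (M i)) (Fin (M ⟨0, hn⟩)) ℂ)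
    (B : Matrix ((i : Fin n) × Fin (M i)) ((i : Fin n) × Fin (M i)) ℂ)
    (hB : ∀ (i j : Fin n) (s : Fin (M i)) (t : Fin (M j)),
      B ⟨i, s⟩ ⟨j, t⟩ = a i j * C i s (Fin.castLE (hle j) t)) :
    B.det =
      (∏ k : Fin n,
        (Matrix.det (Matrix.of fun i j : Fin (k.val + 1) =>
            a (Fin.castLE k.isLt i) (Fin.castLE k.isLt j))) ^
          (M k - if h : k.val + 1 < n then M ⟨k.val + 1, h⟩ else 0)) *
      ∏ i : Fin n,
        Matrix.det (Matrix.of fun s t : Fin (M i) => C i s (Fin.castLE (hle i) t)) := by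
  classical
  set φ : MvPolynomial (Fin n × Fin n) ℂ →+* FractionRing (MvPolynomial (Fin n × Fin n) ℂ) :=
    algebraMap _ _ with hφdef
  have hφ : Function.Injective φ :=
    IsFractionRing.injective (MvPolynomial (Fin n × Fin n) ℂ) _
  set aR : Fin n → Fin n → MvPolynomial (Fin n × Fin n) ℂ :=
    fun i j => MvPolynomial.X (i, j) with haR
  set CR : (i : Fin n) → Matrix (Fin (M i)) (Fin (M ⟨0, hn⟩)) (MvPolynomial (Fin n × Fin n) ℂ) :=
    fun i => (C i).map MvPolynomial.C with hCR
  set BR : Matrix ((i : Fin n) × Fin (M i)) ((i : Fin n) × Fin (M i))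
      (MvPolynomial (Fin n × Fin n) ℂ) :=
    Matrix.of (fun p q => aR p.1 q.1 * CR p.1 p.2 (Fin.castLE (hle q.1) q.2)) with hBR
  -- generic leading minors are nonzero
  have hAR : ∀ k : Fin n, (Amat n aR k).det ≠ 0 := by
    intro k hzero
    have h0 := congrArg
      (MvPolynomial.eval (fun p : Fin n × Fin n => if p.1 = p.2 then (1 : ℂ) else 0)) hzero
    rw [RingHom.map_det, RingHom.mapMatrix_apply, map_zero] at h0
    have h1 : (Amat n aR k).map
        (MvPolynomial.eval (fun p : Fin n × Fin n => if p.1 = p.2 then (1 : ℂ) else 0))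
        = (1 : Matrix (Fin (k.val + 1)) (Fin (k.val + 1)) ℂ) := by
      ext i j
      simp [Amat, Matrix.map_apply, haR, Matrix.one_apply, Fin.castLE_inj]
    rw [h1, Matrix.det_one] at h0
    exact one_ne_zero h0
  have hAK : ∀ k : Fin n, (Amat n (fun i j => φ (aR i j)) k).det ≠ 0 := by
    intro k
    have hmap : Amat n (fun i j => φ (aR i j)) k = (Amat n aR k).map φ := rfl
    rw [hmap, ← RingHom.mapMatrix_apply, ← RingHom.map_det]
    exact fun h => hAR k (hφ (h.trans (map_zero φ).symm))
  -- apply the generic lemma over the fraction field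
  have hmain := key n hn M hM hle (fun i j => φ (aR i j))
    (fun i => (CR i).map φ) (BR.map φ)
    (fun i j s t => by simp [hBR, Matrix.map_apply, _root_.map_mul]) hAK
  -- pull the identity back to the polynomial ring
  have hReq : BR.det =
      (∏ k : Fin n, (Amat n aR k).det ^
          (M k - if h : k.val + 1 < n then M ⟨k.val + 1, h⟩ else 0)) *
      ∏ i : Fin n,
        Matrix.det (Matrix.of fun s t : Fin (M i) => CR i s (Fin.castLE (hle i) t)) := by
    apply hφ
    rw [_root_.map_mul, map_prod, map_prod]
    rw [RingHom.map_det, RingHom.mapMatrix_apply]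
    rw [hmain]
    congr 1
    · refine Finset.prod_congr rfl fun k _ => ?_
      rw [map_pow, RingHom.map_det, RingHom.mapMatrix_apply]
      rfl
    · refine Finset.prod_congr rfl fun i _ => ?_
      rw [RingHom.map_det, RingHom.mapMatrix_apply]
      rfl
  -- evaluate at the actual values of `a`
  have hev := congrArg (MvPolynomial.eval (fun p : Fin n × Fin n => a p.1 p.2)) hReq
  rw [_root_.map_mul, map_prod, map_prod, RingHom.map_det, RingHom.mapMatrix_apply] at hev
  have hBmap : BR.map (MvPolynomial.eval (fun p : Fin n × Fin n => a p.1 p.2)) = B := by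
    ext ⟨i, s⟩ ⟨j, t⟩
    simp [hBR, Matrix.map_apply, haR, hCR, hB, MvPolynomial.eval_X, MvPolynomial.eval_C]
  rw [hBmap] at hev
  rw [hev]
  congr 1
  · refine Finset.prod_congr rfl fun k _ => ?_
    rw [map_pow, RingHom.map_det, RingHom.mapMatrix_apply]
    have hAm : (Amat n aR k).map (MvPolynomial.eval (fun p : Fin n × Fin n => a p.1 p.2))
        = Matrix.of fun i j : Fin (k.val + 1) =>
            a (Fin.castLE k.isLt i) (Fin.castLE k.isLt j) := by
      ext i j
      simp [Amat, Matrix.map_apply, haR, MvPolynomial.eval_X]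
    rw [hAm]
  · refine Finset.prod_congr rfl fun i _ => ?_
    rw [RingHom.map_det, RingHom.mapMatrix_apply]
    have hCm : (Matrix.of fun s t : Fin (M i) =>
          CR i s (Fin.castLE (hle i) t)).map
            (MvPolynomial.eval (fun p : Fin n × Fin n => a p.1 p.2))
        = Matrix.of fun s t : Fin (M i) => C i s (Fin.castLE (hle i) t) := by
      ext s t
      simp [Matrix.map_apply, hCR, MvPolynomial.eval_C]
    rw [hCm]
end
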